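/- arXiv:2305.08132 — 5 statements merged into one kernel-verified Lean document; each statement's English description precedes it below -/
import Mathlib

section
/- The noncommutative Cauchy product Ω(x,u) = H(x_1,u)·H(x_2,u)···, where H(x,u) = Σ_{ℓ≥0} x^ℓ h_ℓ(u), equals Σ_w F_{d, Des(w)}(x) · u_w, the sum over all words w on {1,...,N}, where d is the length of w, Des(w) = {i : w_i > w_{i+1}} is the descent set, and F_{d,S}(x) is the fundamental quasisymmetric function. -/
open scoped Classical

/-- The noncommutative elementary symmetric function
`e_k(u) = Σ_{i_1 > ⋯ > i_k} u_{i_1} ⋯ u_{i_k}` in the free associative algebra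
`U = ℚ⟨u_1, …, u_N⟩`. -/
noncomputable def eU (N k : ℕ) : FreeAlgebra ℚ (Fin N) :=
  ∑ w ∈ Finset.univ.filter (fun w : Fin k → Fin N => ∀ i j : Fin k, i < j → w j < w i),
    (List.ofFn fun i => FreeAlgebra.ι ℚ (w i)).prod

/-- The sum `Σ_{i_1 ≤ ⋯ ≤ i_k} u_{i_1} ⋯ u_{i_k}` over weakly increasing words. -/
noncomputable def hUmono (N k : ℕ) : FreeAlgebra ℚ (Fin N) :=
  ∑ w ∈ Finset.univ.filter (fun w : Fin k → Fin N => ∀ i j : Fin k, i ≤ j → w i ≤ w j),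
    (List.ofFn fun i => FreeAlgebra.ι ℚ (w i)).prod

/-- The noncommutative complete homogeneous symmetric function, defined
inductively by `h_k(u) = e_1(u) h_{k-1}(u) - e_2(u) h_{k-2}(u) + ⋯ + (-1)^{k-1} e_k(u)`,
with `h_0(u) = 1`. -/
noncomputable def hU (N : ℕ) : ℕ → FreeAlgebra ℚ (Fin N)
  | 0 => 1
  | (k + 1) =>
      ∑ i ∈ Finset.range (k + 1), ((-1 : ℚ) ^ i) • (eU N (i + 1) * hU N (k - i))
  termination_by k => k
  decreasing_by omega

/-- Degree of a monomial. -/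
noncomputable def degd (d : ℕ →₀ ℕ) : ℕ := d.sum fun _ n => n

/-- The noncommutative Cauchy product `Ω(x,u) = H(x_1,u) H(x_2,u) ⋯`, where
`H(x,u) = Σ_ℓ x^ℓ h_ℓ(u)`: the coefficient of a monomial `Π_i x_i^{d_i}` is the
ordered product `Π_i h_{d_i}(u)` (over the variables occurring, in increasing
order; the omitted factors are `h_0(u) = 1`). -/
noncomputable def Omega (N : ℕ) : MvPowerSeries ℕ (FreeAlgebra ℚ (Fin N)) :=
  fun d => ((d.support.sort (· ≤ ·)).map fun i => hU N (d i)).prod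

/-- The fundamental quasisymmetric function `F_{n,S}`: the sum of monomials
`x_{a_1} ⋯ x_{a_n}` over weakly increasing sequences `a` which increase strictly
at each position of `S`. -/
noncomputable def fundQS (n : ℕ) (S : Finset (Fin n)) : MvPowerSeries ℕ ℚ :=
  fun d => (Nat.card {a : Fin n → ℕ //
    (∀ i j : Fin n, i ≤ j → a i ≤ a j) ∧
    (∀ i : Fin n, ∀ h : (i : ℕ) + 1 < n, i ∈ S → a i < a ⟨(i : ℕ) + 1, h⟩) ∧
    (∀ j : ℕ, Nat.card {i : Fin n // a i = j} = d j)} : ℚ)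

/-- The descent set of a word `w`. -/
noncomputable def DesW {N n : ℕ} (w : Fin n → Fin N) : Finset (Fin n) :=
  Finset.univ.filter fun i : Fin n =>
    ∃ h : (i : ℕ) + 1 < n, w ⟨(i : ℕ) + 1, h⟩ < w i

/-- The monomial `u_w = u_{w_1} ⋯ u_{w_n}` of a word. -/
noncomputable def uword {N n : ℕ} (w : Fin n → Fin N) : FreeAlgebra ℚ (Fin N) :=
  (List.ofFn fun i => FreeAlgebra.ι ℚ (w i)).prod


noncomputable section
namespace S8
variable (N : ℕ)

def xv (n : ℕ) : FreeAlgebra ℚ (Fin N) :=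
  if h : n < N then FreeAlgebra.ι ℚ (⟨n, h⟩ : Fin N) else 0

def eB (n j : ℕ) : FreeAlgebra ℚ (Fin N) :=
  ∑ w ∈ Finset.univ.filter (fun w : Fin j → Fin N =>
      (∀ i j : Fin j, i < j → w j < w i) ∧ ∀ i, (w i : ℕ) < n),
    (List.ofFn fun i => FreeAlgebra.ι ℚ (w i)).prod

def hB (n k : ℕ) : FreeAlgebra ℚ (Fin N) :=
  ∑ w ∈ Finset.univ.filter (fun w : Fin k → Fin N =>
      (∀ i j : Fin k, i ≤ j → w i ≤ w j) ∧ ∀ i, (w i : ℕ) < n),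
    (List.ofFn fun i => FreeAlgebra.ι ℚ (w i)).prod

lemma eB_stable {n j : ℕ} (hn : N ≤ n) : eB N (n + 1) j = eB N n j := by
  rw [eB, eB]
  apply Finset.sum_congr _ (fun _ _ => rfl)
  apply Finset.filter_congr
  intro w _
  constructor
  · exact fun h => ⟨h.1, fun i => lt_of_lt_of_le (w i).2 hn⟩
  · exact fun h => ⟨h.1, fun i => lt_of_lt_of_le (w i).2 (le_trans hn (Nat.le_succ n))⟩

lemma hB_stable {n k : ℕ} (hn : N ≤ n) : hB N (n + 1) k = hB N n k := by
  rw [hB, hB]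
  apply Finset.sum_congr _ (fun _ _ => rfl)
  apply Finset.filter_congr
  intro w _
  constructor
  · exact fun h => ⟨h.1, fun i => lt_of_lt_of_le (w i).2 hn⟩
  · exact fun h => ⟨h.1, fun i => lt_of_lt_of_le (w i).2 (le_trans hn (Nat.le_succ n))⟩

lemma eB_succ (n j : ℕ) :
    eB N (n + 1) (j + 1) = eB N n (j + 1) + xv N n * eB N n j := by
  by_cases hn : n < N
  swap
  · have hn' : N ≤ n := le_of_not_gt hn
    rw [xv, dif_neg hn, zero_mul, add_zero, eB_stable N hn']
  -- main case
  set ν : Fin N := ⟨n, hn⟩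
  rw [eB]
  rw [← Finset.sum_filter_add_sum_filter_not _ (fun w : Fin (j+1) → Fin N => w 0 = ν),
    add_comm (eB N n (j + 1))]
  congr 1
  swap
  · -- w 0 ≠ ν part equals eB N n (j+1)
    rw [eB]
    apply Finset.sum_congr _ (fun _ _ => rfl)
    rw [Finset.filter_filter]
    apply Finset.filter_congr
    intro w _
    constructor
    · rintro ⟨⟨hdec, hlt⟩, hne⟩
      refine ⟨hdec, fun i => ?_⟩
      have h0 : w i ≤ w 0 := by
        rcases eq_or_lt_of_le (Fin.zero_le i) with h | h
        · rw [← h]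
        · exact le_of_lt (hdec 0 i h)
      have : (w 0 : ℕ) < n + 1 := hlt 0
      have : (w 0 : ℕ) ≠ n := fun he => hne (Fin.ext he)
      omega
    · rintro ⟨hdec, hlt⟩
      refine ⟨⟨hdec, fun i => Nat.lt_succ_of_lt (hlt i)⟩, fun he => ?_⟩
      have := hlt 0
      rw [he] at this
      exact lt_irrefl _ this
  · -- w 0 = ν part equals xv N n * eB N n j
    rw [xv, dif_pos hn, eB, Finset.mul_sum]
    apply Finset.sum_nbij' (fun w => w ∘ Fin.succ) (fun v => Fin.cons ν v)
    · intro w hw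
      simp only [Finset.mem_filter, Finset.mem_univ, true_and] at hw ⊢
      obtain ⟨⟨hdec, _⟩, h0⟩ := hw
      refine ⟨fun i k hik => hdec _ _ (by simpa using hik), fun i => ?_⟩
      have := hdec 0 i.succ (Fin.succ_pos i)
      rw [h0] at this
      exact this
    · intro v hv
      simp only [Finset.mem_filter, Finset.mem_univ, true_and] at hv ⊢
      obtain ⟨hdec, hlt⟩ := hv
      refine ⟨⟨?_, ?_⟩, Fin.cons_zero _ _⟩
      · intro i k hik
        induction k using Fin.cases with
        | zero => exact absurd hik (Fin.not_lt_zero i)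
        | succ k' =>
          induction i using Fin.cases with
          | zero =>
            simp only [Fin.cons_zero, Fin.cons_succ]
            exact Fin.lt_def.mpr (hlt k')
          | succ i' =>
            simp only [Fin.cons_succ]
            exact hdec _ _ (by simpa using hik)
      · intro i
        refine Fin.cases ?_ (fun i' => ?_) i
        · simp [ν]
        · simp only [Fin.cons_succ]
          exact Nat.lt_succ_of_lt (hlt i')
    · intro w hw
      simp only [Finset.mem_filter, Finset.mem_univ, true_and] at hw
      funext i
      refine Fin.cases ?_ (fun i' => ?_) i
      · simp [hw.2]
      · simp
    · intro v _
      funext i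
      simp
    · intro w hw
      simp only [Finset.mem_filter, Finset.mem_univ, true_and] at hw
      rw [List.ofFn_succ, List.prod_cons, hw.2]
      rfl
lemma hB_succ (n k : ℕ) :
    hB N (n + 1) (k + 1) = hB N n (k + 1) + hB N (n + 1) k * xv N n := by
  by_cases hn : n < N
  swap
  · have hn' : N ≤ n := le_of_not_gt hn
    rw [xv, dif_neg hn, mul_zero, add_zero, hB_stable N hn']
  set ν : Fin N := ⟨n, hn⟩
  rw [hB]
  rw [← Finset.sum_filter_add_sum_filter_not _
      (fun w : Fin (k+1) → Fin N => w (Fin.last k) = ν),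
    add_comm (hB N n (k + 1))]
  congr 1
  swap
  · -- last letter ≠ ν : equals hB N n (k+1)
    rw [hB]
    apply Finset.sum_congr _ (fun _ _ => rfl)
    rw [Finset.filter_filter]
    apply Finset.filter_congr
    intro w _
    constructor
    · rintro ⟨⟨hmon, hlt⟩, hne⟩
      refine ⟨hmon, fun i => ?_⟩
      have h0 : w i ≤ w (Fin.last k) := hmon i (Fin.last k) (Fin.le_last i)
      have h1 : (w (Fin.last k) : ℕ) < n + 1 := hlt _
      have h2 : (w (Fin.last k) : ℕ) ≠ n := fun he => hne (Fin.ext he)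
      have := Fin.le_def.mp h0
      omega
    · rintro ⟨hmon, hlt⟩
      refine ⟨⟨hmon, fun i => Nat.lt_succ_of_lt (hlt i)⟩, fun he => ?_⟩
      have := hlt (Fin.last k)
      rw [he] at this
      exact lt_irrefl _ this
  · -- last letter = ν : equals hB N (n+1) k * xv N n
    rw [xv, dif_pos hn, hB, Finset.sum_mul]
    apply Finset.sum_nbij' (fun w => w ∘ Fin.castSucc) (fun v => Fin.snoc v ν)
    · intro w hw
      simp only [Finset.mem_filter, Finset.mem_univ, true_and] at hw ⊢
      obtain ⟨⟨hmon, hlt⟩, _⟩ := hw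
      exact ⟨fun i j hij => hmon _ _ (by simpa using hij), fun i => hlt _⟩
    · intro v hv
      simp only [Finset.mem_filter, Finset.mem_univ, true_and] at hv ⊢
      obtain ⟨hmon, hlt⟩ := hv
      refine ⟨⟨?_, ?_⟩, Fin.snoc_last _ _⟩
      · intro i j hij
        induction j using Fin.lastCases with
        | last =>
          rw [Fin.snoc_last]
          induction i using Fin.lastCases with
          | last => rw [Fin.snoc_last]
          | cast i' =>
            rw [Fin.snoc_castSucc]
            exact Fin.le_def.mpr (Nat.lt_succ_iff.mp (hlt i'))
        | cast j' =>
          induction i using Fin.lastCases with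
          | last => exact absurd hij (not_le.mpr (Fin.castSucc_lt_last j'))
          | cast i' =>
            rw [Fin.snoc_castSucc, Fin.snoc_castSucc]
            exact hmon _ _ (by simpa using hij)
      · intro i
        induction i using Fin.lastCases with
        | last => simp [ν]
        | cast i' =>
          rw [Fin.snoc_castSucc]
          exact hlt i'
    · intro w hw
      simp only [Finset.mem_filter, Finset.mem_univ, true_and] at hw
      funext i
      induction i using Fin.lastCases with
      | last => simp [hw.2]
      | cast i' => simp
    · intro v _
      funext i
      simp
    · intro w hw
      simp only [Finset.mem_filter, Finset.mem_univ, true_and] at hw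
      rw [List.ofFn_succ', List.concat_eq_append, List.prod_append, hw.2]
      simp [ν]


lemma eB_zero (n : ℕ) : eB N n 0 = 1 := by
  rw [eB]
  rw [Finset.filter_true_of_mem (by intro w _; exact ⟨fun i => i.elim0, fun i => i.elim0⟩)]
  rw [Fintype.sum_unique]
  simp

lemma hB_zero (n : ℕ) : hB N n 0 = 1 := by
  rw [hB]
  rw [Finset.filter_true_of_mem (by intro w _; exact ⟨fun i => i.elim0, fun i => i.elim0⟩)]
  rw [Fintype.sum_unique]
  simp

lemma eB_bot (j : ℕ) : eB N 0 (j + 1) = 0 := by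
  rw [eB, Finset.filter_false_of_mem, Finset.sum_empty]
  intro w _ hw
  exact Nat.not_lt_zero _ (hw.2 0)

lemma hB_bot (k : ℕ) : hB N 0 (k + 1) = 0 := by
  rw [hB, Finset.filter_false_of_mem, Finset.sum_empty]
  intro w _ hw
  exact Nat.not_lt_zero _ (hw.2 0)

/-- `S n k = Σ_j (-1)^j e_j h_{k-j}` with letters `< n`. -/
def SS (n k : ℕ) : FreeAlgebra ℚ (Fin N) :=
  ∑ j ∈ Finset.range (k + 1), ((-1 : ℚ) ^ j) • (eB N n j * hB N n (k - j))

def TT (n k : ℕ) : FreeAlgebra ℚ (Fin N) :=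
  ∑ j ∈ Finset.range (k + 1), ((-1 : ℚ) ^ j) • (eB N n j * hB N (n + 1) (k - j))

lemma TT_eq (n : ℕ) (ih : ∀ k, 1 ≤ k → SS N n k = 0) :
    ∀ k, TT N n k = (xv N n) ^ k := by
  intro k
  induction k with
  | zero =>
    rw [TT, Finset.sum_range_one]
    simp [eB_zero, hB_zero]
  | succ k ihk =>
    rw [TT, Finset.sum_range_succ]
    have hterm : ∀ j ∈ Finset.range (k + 1),
        ((-1 : ℚ) ^ j) • (eB N n j * hB N (n + 1) (k + 1 - j)) =
        ((-1 : ℚ) ^ j) • (eB N n j * hB N n (k + 1 - j)) +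
          (((-1 : ℚ) ^ j) • (eB N n j * hB N (n + 1) (k - j))) * xv N n := by
      intro j hj
      have hj' : j ≤ k := Nat.lt_succ_iff.mp (Finset.mem_range.mp hj)
      have h1 : k + 1 - j = (k - j) + 1 := by omega
      rw [h1, hB_succ, mul_add, smul_add]
      congr 1
      rw [smul_mul_assoc, mul_assoc]
    rw [Finset.sum_congr rfl hterm, Finset.sum_add_distrib, ← Finset.sum_mul]
    have h2 : (∑ j ∈ Finset.range (k + 1),
        ((-1 : ℚ) ^ j) • (eB N n j * hB N (n + 1) (k - j))) = TT N n k := rfl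
    have h3 : SS N n (k + 1) = (∑ j ∈ Finset.range (k + 1),
          ((-1 : ℚ) ^ j) • (eB N n j * hB N n (k + 1 - j))) +
        ((-1 : ℚ) ^ (k + 1)) • (eB N n (k + 1) * hB N (n + 1) (k + 1 - (k + 1))) := by
      rw [SS, Finset.sum_range_succ]
      congr 1
      rw [Nat.sub_self, hB_zero, hB_zero]
    rw [h2, ihk, add_right_comm, ← h3, ih (k + 1) (Nat.succ_le_succ (Nat.zero_le k)),
      zero_add, pow_succ]

lemma SS_eq_zero : ∀ n k, 1 ≤ k → SS N n k = 0 := by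
  intro n
  induction n with
  | zero =>
    intro k hk
    obtain ⟨m, rfl⟩ : ∃ m, k = m + 1 := ⟨k - 1, by omega⟩
    rw [SS]
    apply Finset.sum_eq_zero
    intro j hj
    rcases Nat.eq_zero_or_pos j with h | h
    · subst h
      rw [Nat.sub_zero, hB_bot]
      simp
    · obtain ⟨p, rfl⟩ : ∃ p, j = p + 1 := ⟨j - 1, by omega⟩
      rw [eB_bot]
      simp
  | succ n ihn =>
    intro k hk
    obtain ⟨m, rfl⟩ : ∃ m, k = m + 1 := ⟨k - 1, by omega⟩
    rw [SS, Finset.sum_range_succ']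
    have hterm : ∀ j ∈ Finset.range (m + 1),
        ((-1 : ℚ) ^ (j + 1)) • (eB N (n + 1) (j + 1) * hB N (n + 1) (m + 1 - (j + 1))) =
        ((-1 : ℚ) ^ (j + 1)) • (eB N n (j + 1) * hB N (n + 1) (m - j)) +
          (- (xv N n * (((-1 : ℚ) ^ j) • (eB N n j * hB N (n + 1) (m - j))))) := by
      intro j hj
      have h1 : m + 1 - (j + 1) = m - j := by omega
      rw [h1, eB_succ, add_mul, smul_add]
      congr 1
      rw [mul_assoc, ← mul_smul_comm, pow_succ, mul_smul, neg_one_smul, smul_neg, mul_neg]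
    rw [Finset.sum_congr rfl hterm, Finset.sum_add_distrib]
    have h2 : (∑ j ∈ Finset.range (m + 1),
        ((-1 : ℚ) ^ j) • (eB N n j * hB N (n + 1) (m - j))) = TT N n m := rfl
    have h3 : TT N n (m + 1) = (∑ j ∈ Finset.range (m + 1),
          ((-1 : ℚ) ^ (j + 1)) • (eB N n (j + 1) * hB N (n + 1) (m - j))) +
        ((-1 : ℚ) ^ 0) • (eB N (n + 1) 0 * hB N (n + 1) (m + 1 - 0)) := by
      rw [TT, Finset.sum_range_succ', eB_zero, eB_zero]
      congr 1
      apply Finset.sum_congr rfl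
      intro j _
      rw [Nat.succ_sub_succ]
    have h4 : (∑ j ∈ Finset.range (m + 1),
        - (xv N n * (((-1 : ℚ) ^ j) • (eB N n j * hB N (n + 1) (m - j))))) =
        - (xv N n * TT N n m) := by
      rw [Finset.sum_neg_distrib, ← Finset.mul_sum, h2]
    rw [add_right_comm, ← h3, h4, TT_eq N n ihn, TT_eq N n ihn, pow_succ']
    simp


lemma eB_top (j : ℕ) : eB N N j = eU N j := by
  rw [eB, eU]
  apply Finset.sum_congr _ (fun _ _ => rfl)
  apply Finset.filter_congr
  intro w _
  exact ⟨And.left, fun h => ⟨h, fun i => (w i).2⟩⟩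

lemma hB_top (k : ℕ) : hB N N k = hUmono N k := by
  rw [hB, hUmono]
  apply Finset.sum_congr _ (fun _ _ => rfl)
  apply Finset.filter_congr
  intro w _
  exact ⟨And.left, fun h => ⟨h, fun i => (w i).2⟩⟩

lemma newton (k : ℕ) (hk : 1 ≤ k) :
    ∑ j ∈ Finset.range (k + 1), ((-1 : ℚ) ^ j) • (eU N j * hUmono N (k - j)) = 0 := by
  have h := SS_eq_zero N N k hk
  rw [SS] at h
  rw [← h]
  apply Finset.sum_congr rfl
  intro j _
  rw [eB_top, hB_top]

lemma eU_zero : eU N 0 = 1 := by rw [← eB_top, eB_zero]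

lemma hUmono_zero : hUmono N 0 = 1 := by rw [← hB_top, hB_zero]

lemma hU_eq_hUmono : ∀ k, hU N k = hUmono N k := by
  intro k
  induction k using Nat.strong_induction_on with
  | _ k ih =>
    match k with
    | 0 => rw [hU, hUmono_zero]
    | (k + 1) =>
      rw [hU]
      have h1 : ∀ i ∈ Finset.range (k + 1),
          ((-1 : ℚ) ^ i) • (eU N (i + 1) * hU N (k - i)) =
          ((-1 : ℚ) ^ i) • (eU N (i + 1) * hUmono N (k - i)) := fun i hi => by
        rw [ih _ (by omega)]
      rw [Finset.sum_congr rfl h1]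
      have h2 := newton N (k + 1) (by omega)
      rw [Finset.sum_range_succ'] at h2
      have h3 : ∀ j ∈ Finset.range (k + 1),
          ((-1 : ℚ) ^ (j + 1)) • (eU N (j + 1) * hUmono N (k + 1 - (j + 1))) =
          -(((-1 : ℚ) ^ j) • (eU N (j + 1) * hUmono N (k - j))) := by
        intro j _
        rw [Nat.succ_sub_succ, pow_succ, mul_comm, mul_smul, neg_one_smul]
      rw [Finset.sum_congr rfl h3, Finset.sum_neg_distrib, eU_zero, pow_zero, one_smul,
        one_mul, Nat.sub_zero] at h2
      have h4 : hUmono N (k + 1) -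
          (∑ j ∈ Finset.range (k + 1), ((-1 : ℚ) ^ j) • (eU N (j + 1) * hUmono N (k - j)))
          = 0 := by
        rw [sub_eq_add_neg, add_comm]
        exact h2
      exact (sub_eq_zero.mp h4).symm




/-- splitting a word into two blocks -/
def wsplit (p q : ℕ) : ((Fin p → Fin N) × (Fin q → Fin N)) ≃ (Fin (p + q) → Fin N) where
  toFun mw := Fin.append mw.1 mw.2
  invFun w := (fun i => w (Fin.castAdd q i), fun i => w (Fin.natAdd p i))
  left_inv mw := by
    obtain ⟨m, w'⟩ := mw
    refine Prod.ext ?_ ?_ <;> funext i <;> simp [Fin.append_left, Fin.append_right]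
  right_inv w := by
    funext i
    induction i using Fin.addCases with
    | left i => simp [Fin.append_left]
    | right i => simp [Fin.append_right]

/-- compatibility: each block of `w`, with block lengths given by `ℓ`, is weakly
increasing -/
def Compat : (ℓ : List ℕ) → (Fin ℓ.sum → Fin N) → Prop
  | [] => fun _ => True
  | p :: ℓ => fun w =>
      (∀ i j : Fin p, i ≤ j → w (Fin.castAdd ℓ.sum i) ≤ w (Fin.castAdd ℓ.sum j)) ∧
      Compat ℓ (fun i => w (Fin.natAdd p i))

lemma ind_mul (A B : Prop) :
    (if A then (1 : ℚ) else 0) * (if B then 1 else 0) = if A ∧ B then 1 else 0 := by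
  by_cases hA : A <;> by_cases hB : B <;> simp [hA, hB]

lemma uword_append {p q : ℕ} (m : Fin p → Fin N) (w' : Fin q → Fin N) :
    uword (Fin.append m w') = uword m * uword w' := by
  rw [uword, uword, uword, List.ofFn_add, List.prod_append]
  congr 1
  · exact congrArg List.prod (congrArg List.ofFn (funext fun i => congrArg (FreeAlgebra.ι ℚ) (Fin.append_left m w' i)))
  · exact congrArg List.prod (congrArg List.ofFn (funext fun i => by rw [Fin.append_right]))

lemma compat_append {p : ℕ} {ℓ : List ℕ} (m : Fin p → Fin N) (w' : Fin ℓ.sum → Fin N) :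
    Compat N (p :: ℓ) (Fin.append m w') ↔
      ((∀ i j : Fin p, i ≤ j → m i ≤ m j) ∧ Compat N ℓ w') := by
  show ((∀ i j : Fin p, i ≤ j → Fin.append m w' (Fin.castAdd ℓ.sum i) ≤
      Fin.append m w' (Fin.castAdd ℓ.sum j)) ∧
      Compat N ℓ (fun i => Fin.append m w' (Fin.natAdd p i))) ↔ _
  simp only [Fin.append_left, Fin.append_right]

lemma key (ℓ : List ℕ) :
    (ℓ.map (fun p => hUmono N p)).prod =
    ∑ w : Fin ℓ.sum → Fin N, (if Compat N ℓ w then (1 : ℚ) else 0) • uword w := by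
  induction ℓ with
  | nil =>
    rw [List.map_nil, List.prod_nil]
    have h1 : ∀ w : Fin (List.sum ([] : List ℕ)) → Fin N,
        (if Compat N [] w then (1 : ℚ) else 0) • uword w = 1 := by
      intro w
      rw [if_pos (show Compat N [] w by trivial), one_smul, uword]
      have h2 : (List.ofFn fun i => FreeAlgebra.ι ℚ (w i)) = [] :=
        List.eq_nil_of_length_eq_zero (by simp)
      rw [h2, List.prod_nil]
    rw [Fintype.sum_congr _ _ h1]
    rw [Finset.sum_const, Finset.card_univ]
    have h3 : Fintype.card (Fin (List.sum ([] : List ℕ)) → Fin N) = 1 := by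
      rw [Fintype.card_fun]
      rfl
    rw [h3, one_smul]
  | cons p ℓ ih =>
    rw [List.map_cons, List.prod_cons, ih]
    have hh : hUmono N p = ∑ m : Fin p → Fin N,
        (if (∀ i j : Fin p, i ≤ j → m i ≤ m j) then (1 : ℚ) else 0) • uword m := by
      rw [hUmono, Finset.sum_filter]
      apply Finset.sum_congr rfl
      intro m _
      rw [ite_smul, one_smul, zero_smul]
      rfl
    rw [hh, Finset.sum_mul]
    have hstep : ∀ m : Fin p → Fin N,
        ((if (∀ i j : Fin p, i ≤ j → m i ≤ m j) then (1 : ℚ) else 0) • uword m) *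
          (∑ w' : Fin ℓ.sum → Fin N, (if Compat N ℓ w' then (1 : ℚ) else 0) • uword w') =
        ∑ w' : Fin ℓ.sum → Fin N,
          ((if (∀ i j : Fin p, i ≤ j → m i ≤ m j) then (1 : ℚ) else 0) *
            (if Compat N ℓ w' then 1 else 0)) • (uword m * uword w') := by
      intro m
      rw [Finset.mul_sum]
      apply Finset.sum_congr rfl
      intro w' _
      rw [smul_mul_smul_comm]
    rw [Fintype.sum_congr _ _ hstep]
    rw [← Fintype.sum_prod_type']
    apply Fintype.sum_equiv (wsplit N p ℓ.sum)
    intro mw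
    show _ = (if Compat N (p :: ℓ) (Fin.append mw.1 mw.2) then (1 : ℚ) else 0) •
      uword (Fin.append mw.1 mw.2)
    rw [uword_append]
    have hiff := compat_append N mw.1 mw.2
    by_cases hm : (∀ i j : Fin p, i ≤ j → mw.1 i ≤ mw.1 j) <;>
      by_cases hc : Compat N ℓ mw.2 <;>
      simp [hiff, hm, hc]


/-! ### combinatorial helpers -/

lemma downset_mem {n : ℕ} (S : Finset (Fin n))
    (hdc : ∀ p q : Fin n, p ≤ q → q ∈ S → p ∈ S) (p : Fin n) :
    p ∈ S ↔ (p : ℕ) < S.card := by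
  constructor
  · intro hp
    have hsub : Finset.Iic p ⊆ S := fun q hq => hdc q p (Finset.mem_Iic.mp hq) hp
    have h := Finset.card_le_card hsub
    rw [Fin.card_Iic] at h
    omega
  · intro hp
    by_contra hps
    have hsub : S ⊆ Finset.Iio p := by
      intro q hq
      rw [Finset.mem_Iio]
      by_contra hq2
      exact hps (hdc p q (le_of_not_gt hq2) hq)
    have h := Finset.card_le_card hsub
    rw [Fin.card_Iio] at h
    omega

lemma level_card {n : ℕ} (a : Fin n → ℕ) (t : ℕ) :
    (Finset.univ.filter fun p : Fin n => a p ≤ t).card =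
    ∑ j ∈ Finset.range (t + 1), (Finset.univ.filter fun p : Fin n => a p = j).card := by
  rw [Finset.card_eq_sum_card_fiberwise (f := a) (t := Finset.range (t + 1))
    (fun p hp => Finset.mem_range.mpr (by
      have := (Finset.mem_filter.mp hp).2
      omega))]
  apply Finset.sum_congr rfl
  intro j hj
  have hjt : j ≤ t := by have := Finset.mem_range.mp hj; omega
  congr 1
  ext p
  simp only [Finset.mem_filter, Finset.mem_univ, true_and]
  constructor
  · exact And.right
  · intro h
    exact ⟨by omega, h⟩

lemma mono_le_iff {n : ℕ} {a : Fin n → ℕ} (ha : ∀ i j : Fin n, i ≤ j → a i ≤ a j)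
    (p : Fin n) (t : ℕ) :
    a p ≤ t ↔ (p : ℕ) <
      ∑ j ∈ Finset.range (t + 1), (Finset.univ.filter fun q : Fin n => a q = j).card := by
  rw [← level_card]
  have h := downset_mem (Finset.univ.filter fun q : Fin n => a q ≤ t)
    (fun p q hpq hq => by
      simp only [Finset.mem_filter, Finset.mem_univ, true_and] at hq ⊢
      exact le_trans (ha p q hpq) hq) p
  simpa using h

lemma mono_unique {n : ℕ} {a a' : Fin n → ℕ}
    (ha : ∀ i j : Fin n, i ≤ j → a i ≤ a j) (ha' : ∀ i j : Fin n, i ≤ j → a' i ≤ a' j)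
    (hc : ∀ j, (Finset.univ.filter fun i : Fin n => a i = j).card =
      (Finset.univ.filter fun i : Fin n => a' i = j).card) : a = a' := by
  funext p
  have hsums : ∀ t, (∑ j ∈ Finset.range (t + 1),
      (Finset.univ.filter fun q : Fin n => a q = j).card) =
      ∑ j ∈ Finset.range (t + 1), (Finset.univ.filter fun q : Fin n => a' q = j).card :=
    fun t => Finset.sum_congr rfl fun j _ => hc j
  apply le_antisymm
  · exact (mono_le_iff ha p (a' p)).mpr (by
      rw [hsums]
      exact (mono_le_iff ha' p (a' p)).mp (le_refl _))
  · exact (mono_le_iff ha' p (a p)).mpr (by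
      rw [← hsums]
      exact (mono_le_iff ha p (a p)).mp (le_refl _))

lemma natcard_fiber {n : ℕ} (a : Fin n → ℕ) (j : ℕ) :
    Nat.card {i : Fin n // a i = j} =
      (Finset.univ.filter fun i : Fin n => a i = j).card := by
  rw [Nat.card_eq_fintype_card, Fintype.card_subtype]

lemma fib_split {p q : ℕ} (a : Fin (p + q) → ℕ) (j : ℕ) :
    (Finset.univ.filter fun i : Fin (p + q) => a i = j).card =
    (Finset.univ.filter fun x : Fin p => a (Fin.castAdd q x) = j).card +
    (Finset.univ.filter fun y : Fin q => a (Fin.natAdd p y) = j).card := by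
  rw [Finset.card_filter, Finset.card_filter, Finset.card_filter, Fin.sum_univ_add]

lemma mono_of_step {p : ℕ} {α : Type*} [Preorder α] (f : Fin p → α)
    (hstep : ∀ v (h : v + 1 < p), f ⟨v, by omega⟩ ≤ f ⟨v + 1, h⟩) :
    ∀ i j : Fin p, i ≤ j → f i ≤ f j := by
  have key : ∀ t (i j : Fin p), (j : ℕ) = (i : ℕ) + t → f i ≤ f j := by
    intro t
    induction t with
    | zero =>
      intro i j hij
      have : i = j := Fin.ext (by omega)
      rw [this]
    | succ t iht =>
      intro i j hij
      have hjlt : (i : ℕ) + t + 1 < p := by have := j.2; omega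
      have h1 : f i ≤ f ⟨(i : ℕ) + t, by omega⟩ := iht i ⟨(i : ℕ) + t, by omega⟩ rfl
      have h2 : f ⟨(i : ℕ) + t, by omega⟩ ≤ f ⟨(i : ℕ) + t + 1, hjlt⟩ :=
        hstep ((i : ℕ) + t) hjlt
      have hje : j = ⟨(i : ℕ) + t + 1, hjlt⟩ := Fin.ext (show (j : ℕ) = (i : ℕ) + t + 1 by omega)
      rw [hje]
      exact le_trans h1 h2
  intro i j hij
  exact key ((j : ℕ) - (i : ℕ)) i j (by
    have := Fin.le_def.mp hij
    omega)


lemma core (D : ℕ → ℕ) :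
    ∀ (L : List ℕ), L.Pairwise (· < ·) → (∀ i ∈ L, 0 < D i) →
    ∀ w : Fin ((L.map D).sum) → Fin N,
    Compat N (L.map D) w ↔
      ∃ a : Fin ((L.map D).sum) → ℕ,
        (∀ i j, i ≤ j → a i ≤ a j) ∧
        (∀ i : Fin ((L.map D).sum), ∀ h : (i : ℕ) + 1 < (L.map D).sum,
          w ⟨(i : ℕ) + 1, h⟩ < w i → a i < a ⟨(i : ℕ) + 1, h⟩) ∧
        (∀ j : ℕ, (Finset.univ.filter fun i => a i = j).card = if j ∈ L then D j else 0) := by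
  intro L
  induction L with
  | nil =>
    intro _ _ w
    show Compat N [] w ↔
      ∃ a : Fin 0 → ℕ,
        (∀ i j, i ≤ j → a i ≤ a j) ∧
        (∀ i : Fin 0, ∀ h : (i : ℕ) + 1 < 0, w ⟨(i : ℕ) + 1, h⟩ < w i → a i < a ⟨(i : ℕ) + 1, h⟩) ∧
        (∀ j : ℕ, (Finset.univ.filter fun i => a i = j).card = if j ∈ ([] : List ℕ) then D j else 0)
    constructor
    · intro _
      refine ⟨fun i => 0, fun i _ _ => le_refl _, fun i => i.elim0, fun j => ?_⟩
      rw [if_neg (List.not_mem_nil (a := j))]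
      simp
    · intro _
      exact trivial
  | cons i₀ L ih =>
    intro hs hpos w
    have hs' : L.Pairwise (· < ·) := (List.pairwise_cons.mp hs).2
    have hlt : ∀ b ∈ L, i₀ < b := (List.pairwise_cons.mp hs).1
    have hi₀L : i₀ ∉ L := fun hmem => lt_irrefl i₀ (hlt i₀ hmem)
    have hpos' : ∀ i ∈ L, 0 < D i := fun i hi => hpos i (List.mem_cons_of_mem _ hi)
    have hp : 0 < D i₀ := hpos i₀ (List.mem_cons_self)
    show Compat N (D i₀ :: List.map D L) w ↔
      ∃ a : Fin (D i₀ + (List.map D L).sum) → ℕ,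
        (∀ i j, i ≤ j → a i ≤ a j) ∧
        (∀ i : Fin (D i₀ + (List.map D L).sum), ∀ h : (i : ℕ) + 1 < D i₀ + (List.map D L).sum,
          w ⟨(i : ℕ) + 1, h⟩ < w i → a i < a ⟨(i : ℕ) + 1, h⟩) ∧
        (∀ j : ℕ, (Finset.univ.filter fun i => a i = j).card =
          if j ∈ i₀ :: L then D j else 0)
    constructor
    · -- Compat → ∃ a
      intro hc
      obtain ⟨hm, hrest⟩ : (∀ x y : Fin (D i₀), x ≤ y →
          w (Fin.castAdd ((List.map D L).sum) x) ≤ w (Fin.castAdd ((List.map D L).sum) y)) ∧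
          Compat N (List.map D L) (fun y => w (Fin.natAdd (D i₀) y)) := hc
      obtain ⟨a', ha'mono, ha'des, ha'fib⟩ :=
        (ih hs' hpos' (fun y => w (Fin.natAdd (D i₀) y))).mp hrest
      have ha'L : ∀ y, a' y ∈ L := by
        intro y
        by_contra hy
        have h1 := ha'fib (a' y)
        rw [if_neg hy] at h1
        have h2 : y ∈ Finset.univ.filter (fun i => a' i = a' y) := by simp
        have h3 := Finset.card_pos.mpr ⟨y, h2⟩
        omega
      have ha'gt : ∀ y, i₀ < a' y := fun y => hlt _ (ha'L y)
      have hsplit : ∀ i : Fin (D i₀ + (List.map D L).sum),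
          (∃ x, i = Fin.castAdd ((List.map D L).sum) x) ∨
          (∃ y, i = Fin.natAdd (D i₀) y) :=
        fun i => Fin.addCases (fun x => Or.inl ⟨x, rfl⟩) (fun y => Or.inr ⟨y, rfl⟩) i
      set A : Fin (D i₀ + (List.map D L).sum) → ℕ :=
        fun i => Fin.addCases (fun _ => i₀) a' i with hA
      have hAC : ∀ x : Fin (D i₀), A (Fin.castAdd ((List.map D L).sum) x) = i₀ :=
        fun x => Fin.addCases_left x
      have hAN : ∀ y, A (Fin.natAdd (D i₀) y) = a' y := fun y => Fin.addCases_right y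
      refine ⟨A, ?_, ?_, ?_⟩
      · -- monotone
        intro i j hij
        rcases hsplit i with ⟨x, rfl⟩ | ⟨y, rfl⟩ <;> rcases hsplit j with ⟨x', rfl⟩ | ⟨y', rfl⟩
        · exact le_of_eq ((hAC x).trans (hAC x').symm)
        · rw [hAC, hAN]
          exact le_of_lt (ha'gt y')
        · exfalso
          have h1 := Fin.le_def.mp hij
          simp only [Fin.coe_natAdd, Fin.coe_castAdd] at h1
          have := x'.isLt
          omega
        · rw [hAN, hAN]
          apply ha'mono
          have h1 := Fin.le_def.mp hij
          simp only [Fin.coe_natAdd] at h1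
          exact Fin.le_def.mpr (by omega)
      · -- descents
        intro i h hdes
        by_cases h1 : (i : ℕ) + 1 < D i₀
        · exfalso
          have hle := hm ⟨(i : ℕ), by omega⟩ ⟨(i : ℕ) + 1, h1⟩ (Fin.le_def.mpr (by simp))
          exact absurd hdes (not_lt.mpr hle)
        · by_cases h2 : (i : ℕ) < D i₀
          · -- boundary
            have hy1 : (i : ℕ) + 1 - D i₀ < (List.map D L).sum := by omega
            have e1 : i = Fin.castAdd ((List.map D L).sum) ⟨(i : ℕ), h2⟩ := Fin.ext rfl
            have e2 : (⟨(i : ℕ) + 1, h⟩ : Fin (D i₀ + (List.map D L).sum)) =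
                Fin.natAdd (D i₀) ⟨(i : ℕ) + 1 - D i₀, hy1⟩ :=
              Fin.ext (show (i : ℕ) + 1 = D i₀ + ((i : ℕ) + 1 - D i₀) by omega)
            calc A i = i₀ := (congrArg A e1).trans (hAC _)
              _ < a' ⟨(i : ℕ) + 1 - D i₀, hy1⟩ := ha'gt _
              _ = A ⟨(i : ℕ) + 1, h⟩ := ((congrArg A e2).trans (hAN _)).symm
          · -- interior of tail
            have hge : D i₀ ≤ (i : ℕ) := by omega
            have hy0 : (i : ℕ) - D i₀ < (List.map D L).sum := by have := h; omega
            have hy1 : ((i : ℕ) - D i₀) + 1 < (List.map D L).sum := by omega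
            have e1 : i = Fin.natAdd (D i₀) ⟨(i : ℕ) - D i₀, hy0⟩ :=
              Fin.ext (show (i : ℕ) = D i₀ + ((i : ℕ) - D i₀) by omega)
            have e2 : (⟨(i : ℕ) + 1, h⟩ : Fin (D i₀ + (List.map D L).sum)) =
                Fin.natAdd (D i₀) ⟨((i : ℕ) - D i₀) + 1, hy1⟩ :=
              Fin.ext (show (i : ℕ) + 1 = D i₀ + (((i : ℕ) - D i₀) + 1) by omega)
            have hdes2 : w (Fin.natAdd (D i₀) ⟨((i : ℕ) - D i₀) + 1, hy1⟩) <
                w (Fin.natAdd (D i₀) ⟨(i : ℕ) - D i₀, hy0⟩) := by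
              rw [congrArg w e1] at hdes
              have hdes := lt_of_eq_of_lt (congrArg w e2).symm hdes
              exact hdes
            have hstep := ha'des ⟨(i : ℕ) - D i₀, hy0⟩ hy1 hdes2
            calc A i = a' ⟨(i : ℕ) - D i₀, hy0⟩ := (congrArg A e1).trans (hAN _)
              _ < a' ⟨((i : ℕ) - D i₀) + 1, hy1⟩ := hstep
              _ = A ⟨(i : ℕ) + 1, h⟩ := ((congrArg A e2).trans (hAN _)).symm
      · -- fibers
        intro j
        rw [fib_split]
        have hc1 : (Finset.univ.filter fun x : Fin (D i₀) =>
            A (Fin.castAdd ((List.map D L).sum) x) = j) =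
            Finset.univ.filter fun _ : Fin (D i₀) => i₀ = j :=
          Finset.filter_congr (fun x _ => by rw [hAC])
        have hc2 : (Finset.univ.filter fun y : Fin ((List.map D L).sum) =>
            A (Fin.natAdd (D i₀) y) = j) =
            Finset.univ.filter fun y : Fin ((List.map D L).sum) => a' y = j :=
          Finset.filter_congr (fun y _ => by rw [hAN])
        rw [hc1, hc2]
        by_cases hj : j = i₀
        · rw [Finset.filter_true_of_mem (fun _ _ => hj.symm), Finset.card_univ, Fintype.card_fin,
            Finset.filter_false_of_mem
              (fun y _ => fun he => absurd (he.trans hj) (ne_of_gt (ha'gt y))),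
            Finset.card_empty, add_zero, if_pos (by rw [hj]; exact List.mem_cons_self), hj]
        · rw [Finset.filter_false_of_mem (fun x _ => fun he => hj he.symm),
            Finset.card_empty, zero_add, ha'fib j]
          have hmem : (j ∈ i₀ :: L) ↔ (j ∈ L) :=
            ⟨fun h => (List.mem_cons.mp h).resolve_left hj, List.mem_cons_of_mem _⟩
          by_cases hjL : j ∈ L
          · rw [if_pos hjL, if_pos (hmem.mpr hjL)]
          · rw [if_neg hjL, if_neg (fun hx => hjL (hmem.mp hx))]
    · -- ∃ a → Compat
      rintro ⟨a, hamono, hades, hafib⟩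
      have havals : ∀ i, a i ∈ i₀ :: L := by
        intro i
        by_contra hv
        have h1 := hafib (a i)
        rw [if_neg hv] at h1
        have h2 : i ∈ Finset.univ.filter (fun k => a k = a i) := by simp
        have h3 := Finset.card_pos.mpr ⟨i, h2⟩
        omega
      have havge : ∀ i, i₀ ≤ a i := by
        intro i
        rcases List.mem_cons.mp (havals i) with h | h
        · omega
        · exact le_of_lt (hlt _ h)
      have hScard : (Finset.univ.filter fun i => a i ≤ i₀).card = D i₀ := by
        rw [level_card, Finset.sum_range_succ]
        have hz : ∀ j ∈ Finset.range i₀,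
            (Finset.univ.filter fun i => a i = j).card = 0 := by
          intro j hj
          have hjlt : j < i₀ := Finset.mem_range.mp hj
          rw [hafib j, if_neg]
          intro hmem
          rcases List.mem_cons.mp hmem with h | h
          · omega
          · exact absurd (hlt j h) (by omega)
        rw [Finset.sum_eq_zero hz, zero_add, hafib i₀, if_pos (List.mem_cons_self)]
      have hle_iff : ∀ i, a i ≤ i₀ ↔ (i : ℕ) < D i₀ := by
        intro i
        have hd := downset_mem (Finset.univ.filter fun k => a k ≤ i₀)
          (fun x y hxy hy => by
            simp only [Finset.mem_filter, Finset.mem_univ, true_and] at hy ⊢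
            exact le_trans (hamono x y hxy) hy) i
        rw [hScard] at hd
        simpa using hd
      have haC : ∀ x : Fin (D i₀), a (Fin.castAdd ((List.map D L).sum) x) = i₀ := by
        intro x
        have h1 : a (Fin.castAdd ((List.map D L).sum) x) ≤ i₀ :=
          (hle_iff _).mpr (by simpa using x.isLt)
        exact le_antisymm h1 (havge _)
      have haNL : ∀ y, a (Fin.natAdd (D i₀) y) ∈ L := by
        intro y
        have h1 : ¬ a (Fin.natAdd (D i₀) y) ≤ i₀ := by
          rw [hle_iff]
          simp only [Fin.coe_natAdd]
          omega
        rcases List.mem_cons.mp (havals (Fin.natAdd (D i₀) y)) with h | h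
        · exact absurd (le_of_eq h) h1
        · exact h
      refine ⟨?_, ?_⟩
      · -- first block monotone
        apply mono_of_step
        intro v hv
        by_contra hwlt
        have hvD : v < D i₀ := by omega
        have hwlt' : w (Fin.castAdd ((List.map D L).sum) ⟨v + 1, hv⟩) <
            w (Fin.castAdd ((List.map D L).sum) ⟨v, hvD⟩) := lt_of_not_ge hwlt
        have hglobal : (v : ℕ) + 1 < D i₀ + (List.map D L).sum := by omega
        have hd : a (Fin.castAdd ((List.map D L).sum) ⟨v, hvD⟩) <
            a (Fin.castAdd ((List.map D L).sum) ⟨v + 1, hv⟩) :=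
          hades (Fin.castAdd ((List.map D L).sum) ⟨v, hvD⟩) hglobal hwlt'
        have hx1 : a (Fin.castAdd ((List.map D L).sum) ⟨v, hvD⟩) = i₀ := haC _
        have hx2 : a (Fin.castAdd ((List.map D L).sum) ⟨v + 1, hv⟩) = i₀ := haC _
        exact lt_irrefl i₀ (lt_of_le_of_lt (le_of_eq hx1.symm) (lt_of_lt_of_eq hd hx2))
      · -- compatibility of the rest
        apply (ih hs' hpos' (fun y => w (Fin.natAdd (D i₀) y))).mpr
        refine ⟨fun y => a (Fin.natAdd (D i₀) y), ?_, ?_, ?_⟩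
        · intro y y' hyy
          apply hamono
          exact Fin.le_def.mpr (by
            simp only [Fin.coe_natAdd]
            exact Nat.add_le_add_left (Fin.le_def.mp hyy) _)
        · intro y hy hdes2
          have hglobal : (↑(Fin.natAdd (D i₀) y) : ℕ) + 1 < D i₀ + (List.map D L).sum := by
            simp only [Fin.coe_natAdd]
            omega
          have hd : a (Fin.natAdd (D i₀) y) < a (Fin.natAdd (D i₀) ⟨(y : ℕ) + 1, hy⟩) :=
            hades (Fin.natAdd (D i₀) y) hglobal hdes2
          exact hd
        · intro j
          have htot := hafib j
          rw [fib_split] at htot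
          by_cases hj : j = i₀
          · rw [Finset.filter_false_of_mem
              (fun y _ he => by rw [hj] at he; exact hi₀L (he ▸ haNL y)), Finset.card_empty]
            rw [if_neg (fun hmem => hi₀L (hj ▸ hmem))]
          · have hcast : (Finset.univ.filter fun x : Fin (D i₀) =>
                a (Fin.castAdd ((List.map D L).sum) x) = j).card = 0 := by
              rw [Finset.filter_false_of_mem
                (fun x _ => fun he => hj ((haC x).symm.trans he).symm),
                Finset.card_empty]
            rw [hcast, zero_add] at htot
            rw [htot]
            have hmem : (j ∈ i₀ :: L) ↔ (j ∈ L) :=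
              ⟨fun h => (List.mem_cons.mp h).resolve_left hj, List.mem_cons_of_mem _⟩
            by_cases hjL : j ∈ L
            · rw [if_pos (hmem.mpr hjL), if_pos hjL]
            · rw [if_neg (fun hx => hjL (hmem.mp hx)), if_neg hjL]


lemma final (d : ℕ →₀ ℕ) :
    MvPowerSeries.coeff d (Omega N) =
      ∑ᶠ n : ℕ, ∑ w : Fin n → Fin N,
        (MvPowerSeries.coeff d (fundQS n (DesW w))) • uword w := by
  have hsorted : (d.support.sort (· ≤ ·)).Pairwise (· < ·) := (Finset.sortedLT_sort _).pairwise
  have hposL : ∀ i ∈ d.support.sort (· ≤ ·), 0 < d i := fun i hi =>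
    Nat.pos_of_ne_zero (Finsupp.mem_support_iff.mp ((Finset.mem_sort _).mp hi))
  have hif : ∀ j, (if j ∈ d.support.sort (· ≤ ·) then d j else 0) = d j := by
    intro j
    by_cases hj : j ∈ d.support.sort (· ≤ ·)
    · rw [if_pos hj]
    · rw [if_neg hj]
      have hns : j ∉ d.support := fun hs => hj ((Finset.mem_sort _).mpr hs)
      exact (Finsupp.notMem_support_iff.mp hns).symm
  have hsum : ((d.support.sort (· ≤ ·)).map ⇑d).sum = degd d := by
    have hperm : (((d.support.sort (· ≤ ·)).map ⇑d)).Perm (d.support.toList.map ⇑d) :=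
      (Finset.sort_perm_toList _ _).map _
    rw [hperm.sum_eq, Finset.sum_map_toList]
    rfl
  have hzero : ∀ n : ℕ, n ≠ degd d →
      (∑ w : Fin n → Fin N,
        (MvPowerSeries.coeff d (fundQS n (DesW w))) • uword w) = 0 := by
    intro n hn
    apply Finset.sum_eq_zero
    intro w _
    have hempty : IsEmpty {a : Fin n → ℕ //
        (∀ i j : Fin n, i ≤ j → a i ≤ a j) ∧
        (∀ i : Fin n, ∀ h : (i : ℕ) + 1 < n, i ∈ DesW w → a i < a ⟨(i : ℕ) + 1, h⟩) ∧
        (∀ j : ℕ, Nat.card {i : Fin n // a i = j} = d j)} := by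
      constructor
      rintro ⟨a, -, -, hfib⟩
      apply hn
      have h1 : ∀ p : Fin n, a p ∈ d.support := by
        intro p
        rw [Finsupp.mem_support_iff]
        have h2 := hfib (a p)
        rw [natcard_fiber] at h2
        have h3 : p ∈ Finset.univ.filter (fun k : Fin n => a k = a p) := by simp
        have h4 := Finset.card_pos.mpr ⟨p, h3⟩
        omega
      have h5 : n = ∑ j ∈ d.support, (Finset.univ.filter fun k : Fin n => a k = j).card := by
        have h := Finset.card_eq_sum_card_fiberwise (f := a) (s := (Finset.univ : Finset (Fin n)))
          (t := d.support) (fun p _ => h1 p)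
        rwa [Finset.card_univ, Fintype.card_fin] at h
      have h6 : ∀ j ∈ d.support,
          (Finset.univ.filter fun k : Fin n => a k = j).card = d j := fun j _ => by
        rw [← natcard_fiber, hfib j]
      calc n = ∑ j ∈ d.support, (Finset.univ.filter fun k : Fin n => a k = j).card := h5
        _ = ∑ j ∈ d.support, d j := Finset.sum_congr rfl h6
        _ = degd d := rfl
    have hc0 : Nat.card {a : Fin n → ℕ //
        (∀ i j : Fin n, i ≤ j → a i ≤ a j) ∧
        (∀ i : Fin n, ∀ h : (i : ℕ) + 1 < n, i ∈ DesW w → a i < a ⟨(i : ℕ) + 1, h⟩) ∧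
        (∀ j : ℕ, Nat.card {i : Fin n // a i = j} = d j)} = 0 := by
      haveI := hempty
      exact Nat.card_of_isEmpty
    show ((Nat.card {a : Fin n → ℕ //
        (∀ i j : Fin n, i ≤ j → a i ≤ a j) ∧
        (∀ i : Fin n, ∀ h : (i : ℕ) + 1 < n, i ∈ DesW w → a i < a ⟨(i : ℕ) + 1, h⟩) ∧
        (∀ j : ℕ, Nat.card {i : Fin n // a i = j} = d j)} : ℕ) : ℚ) • uword w = 0
    rw [hc0]
    simp
  rw [finsum_eq_single _ (degd d) hzero, ← hsum]
  have h1 : MvPowerSeries.coeff d (Omega N) =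
      ((d.support.sort (· ≤ ·)).map fun i => hU N (d i)).prod := rfl
  rw [h1]
  have h2 : ((d.support.sort (· ≤ ·)).map fun i => hU N (d i)) =
      ((d.support.sort (· ≤ ·)).map fun i => hUmono N (d i)) := by
    simp only [hU_eq_hUmono]
  rw [h2]
  have h3 : (((d.support.sort (· ≤ ·)).map fun i => hUmono N (d i))).prod =
      ((((d.support.sort (· ≤ ·)).map ⇑d)).map fun p => hUmono N p).prod := by
    rw [List.map_map]
    rfl
  rw [h3, key N ((d.support.sort (· ≤ ·)).map ⇑d)]
  apply Finset.sum_congr rfl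
  intro w _
  congr 1
  show (if Compat N ((d.support.sort (· ≤ ·)).map ⇑d) w then (1 : ℚ) else 0) =
    ((Nat.card {a : Fin (((d.support.sort (· ≤ ·)).map ⇑d).sum) → ℕ //
      (∀ i j : Fin (((d.support.sort (· ≤ ·)).map ⇑d).sum), i ≤ j → a i ≤ a j) ∧
      (∀ i : Fin (((d.support.sort (· ≤ ·)).map ⇑d).sum),
        ∀ h : (i : ℕ) + 1 < ((d.support.sort (· ≤ ·)).map ⇑d).sum,
        i ∈ DesW w → a i < a ⟨(i : ℕ) + 1, h⟩) ∧
      (∀ j : ℕ, Nat.card {i : Fin (((d.support.sort (· ≤ ·)).map ⇑d).sum) // a i = j} =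
        d j)} : ℕ) : ℚ)
  have htrans : (∃ a : Fin (((d.support.sort (· ≤ ·)).map ⇑d).sum) → ℕ,
      (∀ i j : Fin (((d.support.sort (· ≤ ·)).map ⇑d).sum), i ≤ j → a i ≤ a j) ∧
      (∀ i : Fin (((d.support.sort (· ≤ ·)).map ⇑d).sum),
        ∀ h : (i : ℕ) + 1 < ((d.support.sort (· ≤ ·)).map ⇑d).sum,
        w ⟨(i : ℕ) + 1, h⟩ < w i → a i < a ⟨(i : ℕ) + 1, h⟩) ∧
      (∀ j : ℕ, (Finset.univ.filter fun i => a i = j).card =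
        if j ∈ d.support.sort (· ≤ ·) then d j else 0)) ↔
      Nonempty {a : Fin (((d.support.sort (· ≤ ·)).map ⇑d).sum) → ℕ //
      (∀ i j : Fin (((d.support.sort (· ≤ ·)).map ⇑d).sum), i ≤ j → a i ≤ a j) ∧
      (∀ i : Fin (((d.support.sort (· ≤ ·)).map ⇑d).sum),
        ∀ h : (i : ℕ) + 1 < ((d.support.sort (· ≤ ·)).map ⇑d).sum,
        i ∈ DesW w → a i < a ⟨(i : ℕ) + 1, h⟩) ∧
      (∀ j : ℕ, Nat.card {i : Fin (((d.support.sort (· ≤ ·)).map ⇑d).sum) // a i = j} =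
        d j)} := by
    constructor
    · rintro ⟨a, ha1, ha2, ha3⟩
      refine ⟨⟨a, ha1, ?_, ?_⟩⟩
      · intro i h hi
        obtain ⟨hh, hwlt⟩ : ∃ hh : (i : ℕ) + 1 < ((d.support.sort (· ≤ ·)).map ⇑d).sum,
            w ⟨(i : ℕ) + 1, hh⟩ < w i := by
          simpa [DesW] using hi
        exact ha2 i h hwlt
      · intro j
        rw [natcard_fiber, ha3 j, hif j]
    · rintro ⟨⟨a, ha1, ha2, ha3⟩⟩
      refine ⟨a, ha1, ?_, ?_⟩
      · intro i h hwlt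
        apply ha2 i h
        rw [DesW, Finset.mem_filter]
        exact ⟨Finset.mem_univ _, ⟨h, hwlt⟩⟩
      · intro j
        rw [← natcard_fiber, ha3 j, hif j]
  have hss : Subsingleton {a : Fin (((d.support.sort (· ≤ ·)).map ⇑d).sum) → ℕ //
      (∀ i j : Fin (((d.support.sort (· ≤ ·)).map ⇑d).sum), i ≤ j → a i ≤ a j) ∧
      (∀ i : Fin (((d.support.sort (· ≤ ·)).map ⇑d).sum),
        ∀ h : (i : ℕ) + 1 < ((d.support.sort (· ≤ ·)).map ⇑d).sum,
        i ∈ DesW w → a i < a ⟨(i : ℕ) + 1, h⟩) ∧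
      (∀ j : ℕ, Nat.card {i : Fin (((d.support.sort (· ≤ ·)).map ⇑d).sum) // a i = j} =
        d j)} := by
    constructor
    rintro ⟨a, ha1, -, ha3⟩ ⟨b, hb1, -, hb3⟩
    apply Subtype.ext
    exact mono_unique ha1 hb1 (fun j => by
      rw [← natcard_fiber, ← natcard_fiber, ha3 j, hb3 j])
  by_cases hC : Compat N ((d.support.sort (· ≤ ·)).map ⇑d) w
  · rw [if_pos hC]
    have hne := htrans.mp ((core N ⇑d _ hsorted hposL w).mp hC)
    rw [Nat.card_eq_one_iff_unique.mpr ⟨hss, hne⟩]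
    norm_num
  · rw [if_neg hC]
    haveI : IsEmpty {a : Fin (((d.support.sort (· ≤ ·)).map ⇑d).sum) → ℕ //
        (∀ i j : Fin (((d.support.sort (· ≤ ·)).map ⇑d).sum), i ≤ j → a i ≤ a j) ∧
        (∀ i : Fin (((d.support.sort (· ≤ ·)).map ⇑d).sum),
          ∀ h : (i : ℕ) + 1 < ((d.support.sort (· ≤ ·)).map ⇑d).sum,
          i ∈ DesW w → a i < a ⟨(i : ℕ) + 1, h⟩) ∧
        (∀ j : ℕ, Nat.card {i : Fin (((d.support.sort (· ≤ ·)).map ⇑d).sum) // a i = j} =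
          d j)} :=
      ⟨fun x => hC ((core N ⇑d _ hsorted hposL w).mpr (htrans.mpr ⟨x⟩))⟩
    rw [Nat.card_of_isEmpty]
    norm_num

end S8
end

/-- `Ω(x,u) = Σ_w F_{d, Des(w)}(x) · u_w`, the sum over all words
`w` on `{1, …, N}`. -/
theorem stmt8 (N : ℕ) :
    ∀ d : ℕ →₀ ℕ,
      MvPowerSeries.coeff d (Omega N) =
        ∑ᶠ n : ℕ, ∑ w : Fin n → Fin N,
          (MvPowerSeries.coeff d (fundQS n (DesW w))) • uword w := by
  intro d
  exact S8.final N d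
end

section
/- Suppose the two-sided ideal I of U satisfies the commutation relation, γ ∈ I^⊥, and Ω(x,u) ≡ Σ_λ g_λ(x) f_λ(u) mod I[[x]] for a symmetric function basis {g_λ} and noncommutative elements f_λ(u) ∈ U. Then F_γ(x) := ⟨Ω(x,u), γ⟩ equals Σ_λ g_λ(x)·⟨f_λ(u), γ⟩; in particular F_γ is a symmetric function. -/
open scoped Classical

/-- A partition, encoded as a weakly decreasing list of positive integers. -/
def IsPartitionList (l : List ℕ) : Prop :=
  l.Pairwise (· ≥ ·) ∧ ∀ i ∈ l, 0 < i

/-- The monomial symmetric function `m_λ`. -/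
noncomputable def msym (l : List ℕ) : MvPowerSeries ℕ ℚ :=
  fun d => if d.support.val.map d = (l : Multiset ℕ) then 1 else 0

/-- The space of symmetric functions: the span of the monomial symmetric functions. -/
noncomputable def SymQ : Submodule ℚ (MvPowerSeries ℕ ℚ) :=
  Submodule.span ℚ {f | ∃ l : List ℕ, IsPartitionList l ∧ f = msym l}

/-- Partitions, as weakly decreasing lists of positive integers. -/
def ParL := {l : List ℕ // IsPartitionList l}

/-- The pairing between `U` and the free module `U*` on words, with
`⟨u_w, v⟩ = δ_{w,v}`. -/
noncomputable def pairU {N : ℕ} (z : FreeAlgebra ℚ (Fin N))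
    (γ : FreeMonoid (Fin N) →₀ ℚ) : ℚ :=
  ((FreeAlgebra.basisFreeMonoid ℚ (Fin N)).repr z).sum fun w c => c * γ w


noncomputable def pairL {N : ℕ} (γ : FreeMonoid (Fin N) →₀ ℚ) :
    FreeAlgebra ℚ (Fin N) →ₗ[ℚ] ℚ :=
  (Finsupp.lsum ℚ fun w => LinearMap.toSpanSingleton ℚ ℚ (γ w)).comp
    (FreeAlgebra.basisFreeMonoid ℚ (Fin N)).repr.toLinearMap

lemma pairU_eq_pairL {N : ℕ} (γ : FreeMonoid (Fin N) →₀ ℚ) (z : FreeAlgebra ℚ (Fin N)) :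
    pairU z γ = pairL γ z := by
  simp [pairL, pairU, Finsupp.lsum_apply, LinearMap.toSpanSingleton_apply, Finsupp.sum,
    smul_eq_mul]

lemma multiset_perm (π : Equiv.Perm ℕ) (d : ℕ →₀ ℕ) :
    (Finsupp.equivMapDomain π d).support.val.map (Finsupp.equivMapDomain π d)
      = d.support.val.map d := by
  have h : (Finsupp.equivMapDomain π d).support = d.support.map π.toEmbedding := rfl
  rw [h]
  simp [Finset.map_val, Multiset.map_map, Function.comp_def]

lemma msym_perm (l : List ℕ) (π : Equiv.Perm ℕ) (d : ℕ →₀ ℕ) :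
    MvPowerSeries.coeff (Finsupp.equivMapDomain π d) (msym l)
      = MvPowerSeries.coeff d (msym l) := by
  rw [MvPowerSeries.coeff_apply, MvPowerSeries.coeff_apply]
  simp only [msym, multiset_perm]

lemma symQ_coeff_perm {f : MvPowerSeries ℕ ℚ} (hf : f ∈ SymQ) (π : Equiv.Perm ℕ)
    (d : ℕ →₀ ℕ) :
    MvPowerSeries.coeff (Finsupp.equivMapDomain π d) f = MvPowerSeries.coeff d f := by
  induction hf using Submodule.span_induction with
  | mem x hx => obtain ⟨l, -, rfl⟩ := hx; exact msym_perm l π d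
  | zero => simp
  | add x y hx hy ihx ihy => simp [ihx, ihy]
  | smul c x hx ih => simp [ih]


/-- if `I` satisfies the commutation relation, `γ ∈ I^⊥`, and
`Ω(x,u) ≡ Σ_λ g_λ(x) f_λ(u) mod I[[x]]` for a symmetric function basis `{g_λ}`,
then `F_γ(x) = Σ_λ g_λ(x) ⟨f_λ(u), γ⟩`; in particular `F_γ` is a symmetric
function (invariant under all permutations of the variables). -/
theorem stmt10 (N : ℕ) (I : TwoSidedIdeal (FreeAlgebra ℚ (Fin N)))
    (hcomm : ∀ k l : ℕ, 1 ≤ k → 1 ≤ l →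
      eU N k * eU N l - eU N l * eU N k ∈ I)
    (γ : FreeMonoid (Fin N) →₀ ℚ)
    (hγ : ∀ z ∈ I, pairU z γ = 0)
    (g : ParL → MvPowerSeries ℕ ℚ)
    (hgmem : ∀ l, g l ∈ SymQ) (hgind : LinearIndependent ℚ g)
    (hgspan : Submodule.span ℚ (Set.range g) = SymQ)
    (fu : ParL → FreeAlgebra ℚ (Fin N))
    (hfin : ∀ d : ℕ →₀ ℕ, {l : ParL | MvPowerSeries.coeff d (g l) ≠ 0}.Finite)
    (hΩ : ∀ d : ℕ →₀ ℕ,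
      MvPowerSeries.coeff d (Omega N)
        - ∑ᶠ l : ParL, (MvPowerSeries.coeff d (g l)) • fu l ∈ I) :
    (∀ d : ℕ →₀ ℕ,
        pairU (MvPowerSeries.coeff d (Omega N)) γ =
          ∑ᶠ l : ParL, MvPowerSeries.coeff d (g l) * pairU (fu l) γ)
      ∧ (∀ π : Equiv.Perm ℕ, ∀ d : ℕ →₀ ℕ,
          pairU (MvPowerSeries.coeff (Finsupp.equivMapDomain π d) (Omega N)) γ =
            pairU (MvPowerSeries.coeff d (Omega N)) γ) := by
  have hfinS : ∀ d : ℕ →₀ ℕ,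
      (Function.support fun l : ParL => (MvPowerSeries.coeff d (g l)) • fu l).Finite := by
    intro d
    refine (hfin d).subset ?_
    intro l hl
    simp only [Function.mem_support] at hl
    simp only [Set.mem_setOf_eq]
    intro h0
    exact hl (by rw [h0, zero_smul])
  have key : ∀ d : ℕ →₀ ℕ,
      pairU (MvPowerSeries.coeff d (Omega N)) γ =
        ∑ᶠ l : ParL, MvPowerSeries.coeff d (g l) * pairU (fu l) γ := by
    intro d
    have h0 : pairU (MvPowerSeries.coeff d (Omega N)
        - ∑ᶠ l : ParL, (MvPowerSeries.coeff d (g l)) • fu l) γ = 0 := hγ _ (hΩ d)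
    rw [pairU_eq_pairL, map_sub, sub_eq_zero] at h0
    have h1 : pairL γ (∑ᶠ l : ParL, (MvPowerSeries.coeff d (g l)) • fu l)
        = ∑ᶠ l : ParL, pairL γ ((MvPowerSeries.coeff d (g l)) • fu l) :=
      (pairL γ).toAddMonoidHom.map_finsum (hfinS d)
    rw [pairU_eq_pairL, h0, h1]
    refine finsum_congr fun l => ?_
    rw [map_smul, smul_eq_mul, pairU_eq_pairL]
  refine ⟨key, fun π d => ?_⟩
  rw [key, key d]
  refine finsum_congr fun l => ?_
  rw [symQ_coeff_perm (hgmem l) π d]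
end

section
/- The plactic ideal I_plac of U = ℚ⟨u_1,...,u_N⟩, generated by u_a u_c u_b - u_c u_a u_b for a ≤ b < c and u_b u_a u_c - u_b u_c u_a for a < b ≤ c, satisfies the commutation relation: e_k(u) e_ℓ(u) ≡ e_ℓ(u) e_k(u) mod I_plac for all k, ℓ ≥ 1. -/
open scoped Classical

/-- The plactic ideal of `U = ℚ⟨u_1,…,u_N⟩`: the two-sided ideal generated by
`u_a u_c u_b - u_c u_a u_b` (`a ≤ b < c`) and `u_b u_a u_c - u_b u_c u_a`
(`a < b ≤ c`). -/
noncomputable def Iplac (N : ℕ) : TwoSidedIdeal (FreeAlgebra ℚ (Fin N)) :=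
  TwoSidedIdeal.span
    ({z | ∃ a b c : Fin N, a ≤ b ∧ b < c ∧
        z = FreeAlgebra.ι ℚ a * FreeAlgebra.ι ℚ c * FreeAlgebra.ι ℚ b
          - FreeAlgebra.ι ℚ c * FreeAlgebra.ι ℚ a * FreeAlgebra.ι ℚ b} ∪
     {z | ∃ a b c : Fin N, a < b ∧ b ≤ c ∧
        z = FreeAlgebra.ι ℚ b * FreeAlgebra.ι ℚ a * FreeAlgebra.ι ℚ c
          - FreeAlgebra.ι ℚ b * FreeAlgebra.ι ℚ c * FreeAlgebra.ι ℚ a})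

section Word
variable {R : Type*} [Ring R] (x : ℕ → R)

/-- product of the letters of a word -/
def Pw (L : List ℕ) : R := (L.map x).prod

@[simp] lemma Pw_nil : Pw x [] = 1 := rfl
@[simp] lemma Pw_cons (a : ℕ) (L : List ℕ) : Pw x (a :: L) = x a * Pw x L := by
  simp [Pw]
lemma Pw_append (L M : List ℕ) : Pw x (L ++ M) = Pw x L * Pw x M := by
  simp [Pw]
@[simp] lemma Pw_singleton (a : ℕ) : Pw x [a] = x a := by simp [Pw]

variable (hK2 : ∀ a b c : ℕ, a < b → b ≤ c → x b * x a * x c = x b * x c * x a)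
variable (hK1 : ∀ a b c : ℕ, a ≤ b → b < c → x a * x c * x b = x c * x a * x b)

include hK2 in
/-- Lemma B: a big letter bubbles left through a strictly decreasing word. -/
lemma bubbleR : ∀ (T : List ℕ) (h n : ℕ), (h :: T).Pairwise (· > ·) →
    (∀ a ∈ h :: T, a ≤ n) → Pw x (h :: T) * x n = x h * x n * Pw x T := by
  intro T
  induction T with
  | nil => intro h n _ _; simp [mul_assoc]
  | cons t T' ih =>
      intro h n hp hb
      have h1 : t < h := (List.pairwise_cons.1 hp).1 t (by simp)
      have h2 : h ≤ n := hb h (by simp)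
      have hp' : (t :: T').Pairwise (· > ·) := (List.pairwise_cons.1 hp).2
      have hb' : ∀ a ∈ t :: T', a ≤ n := fun a ha => hb a (List.mem_cons_of_mem _ ha)
      calc Pw x (h :: t :: T') * x n = x h * (Pw x (t :: T') * x n) := by
            simp [mul_assoc]
        _ = x h * (x t * x n * Pw x T') := by rw [ih t n hp' hb']
        _ = (x h * x t * x n) * Pw x T' := by simp [mul_assoc]
        _ = (x h * x n * x t) * Pw x T' := by rw [hK2 t h n h1 h2]
        _ = x h * x n * Pw x (t :: T') := by simp [mul_assoc]

include hK2 in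
lemma L1w (L : List ℕ) (n : ℕ) (hp : L.Pairwise (· > ·)) (hb : ∀ a ∈ L, a < n) :
    x n * Pw x L * x n = x n * x n * Pw x L := by
  cases L with
  | nil => simp
  | cons h T =>
      have hb' : ∀ a ∈ h :: T, a ≤ n := fun a ha => le_of_lt (hb a ha)
      calc x n * Pw x (h :: T) * x n = x n * (Pw x (h :: T) * x n) := by
            simp [mul_assoc]
        _ = x n * (x h * x n * Pw x T) := by rw [bubbleR x hK2 T h n hp hb']
        _ = (x n * x h * x n) * Pw x T := by simp [mul_assoc]
        _ = (x n * x n * x h) * Pw x T := by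
            rw [hK2 h n n (hb h (by simp)) le_rfl]
        _ = x n * x n * Pw x (h :: T) := by simp [mul_assoc]

include hK2 in
/-- swap: β · D · w = β · w · D for D strictly decreasing with entries < β ≤ w. -/
lemma swapW (L : List ℕ) (β w : ℕ) (hp : L.Pairwise (· > ·)) (hb : ∀ a ∈ L, a < β)
    (hw : β ≤ w) : x β * Pw x L * x w = x β * x w * Pw x L := by
  cases L with
  | nil => simp
  | cons h T =>
      have hb' : ∀ a ∈ h :: T, a ≤ w := fun a ha => le_of_lt (lt_of_lt_of_le (hb a ha) hw)
      calc x β * Pw x (h :: T) * x w = x β * (Pw x (h :: T) * x w) := by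
            simp [mul_assoc]
        _ = x β * (x h * x w * Pw x T) := by rw [bubbleR x hK2 T h w hp hb']
        _ = (x β * x h * x w) * Pw x T := by simp [mul_assoc]
        _ = (x β * x w * x h) * Pw x T := by
            rw [hK2 h β w (hb h (by simp)) hw]
        _ = x β * x w * Pw x (h :: T) := by simp [mul_assoc]

include hK1 in
/-- a small letter β moves right through a strictly decreasing word of letters > w,
when followed by w with β ≤ w. -/
lemma bubbleLw : ∀ (V : List ℕ) (β w : ℕ), V.Pairwise (· > ·) → (∀ v ∈ V, w < v) →
    β ≤ w → x β * Pw x V * x w = Pw x V * (x β * x w) := by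
  intro V
  induction V with
  | nil => intro β w _ _ _; simp [mul_assoc]
  | cons v V' ih =>
      intro β w hp hv hw
      have hp' : V'.Pairwise (· > ·) := (List.pairwise_cons.1 hp).2
      have hv' : ∀ a ∈ V', w < a := fun a ha => hv a (List.mem_cons_of_mem _ ha)
      cases V' with
      | nil =>
          have h1 : β ≤ w := hw
          have h2 : w < v := hv v (by simp)
          calc x β * Pw x [v] * x w = x β * x v * x w := by simp [mul_assoc]
            _ = x v * x β * x w := by rw [hK1 β w v h1 h2]
            _ = Pw x [v] * (x β * x w) := by simp [mul_assoc]
      | cons v₂ V'' =>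
          have h1 : β ≤ v₂ := le_trans hw (le_of_lt (hv' v₂ (by simp)))
          have h2 : v₂ < v := (List.pairwise_cons.1 hp).1 v₂ (by simp)
          calc x β * Pw x (v :: v₂ :: V'') * x w
              = (x β * x v * x v₂) * (Pw x V'' * x w) := by simp [mul_assoc]
            _ = (x v * x β * x v₂) * (Pw x V'' * x w) := by rw [hK1 β v₂ v h1 h2]
            _ = x v * (x β * Pw x (v₂ :: V'') * x w) := by simp [mul_assoc]
            _ = x v * (Pw x (v₂ :: V'') * (x β * x w)) := by
                rw [ih β w hp' hv' hw]
            _ = Pw x (v :: v₂ :: V'') * (x β * x w) := by simp [mul_assoc]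
end Word


section ColList

/-- the strictly decreasing list of elements of `S` -/
def colL (S : Finset ℕ) : List ℕ := (S.sort (· ≤ ·)).reverse

lemma colL_pairwise (S : Finset ℕ) : (colL S).Pairwise (· > ·) := by
  rw [colL, List.pairwise_reverse]
  exact S.sortedLT_sort.pairwise

lemma mem_colL {a : ℕ} {S : Finset ℕ} : a ∈ colL S ↔ a ∈ S := by
  simp [colL, Finset.mem_sort]

@[simp] lemma colL_empty : colL ∅ = [] := by simp [colL]

lemma colL_insert (m : ℕ) (S : Finset ℕ) (hb : ∀ a ∈ S, a < m) :
    colL (insert m S) = m :: colL S := by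
  have hm : m ∉ S := fun h => lt_irrefl m (hb m h)
  have h1 : (insert m S).sort (· ≤ ·) = S.sort (· ≤ ·) ++ [m] := by
    refine (fun hp h1 h2 => List.Perm.eq_of_pairwise' (r := (· ≤ ·)) h1 h2 hp) ?_ ?_ ?_
    · refine ((insert m S).sort_perm_toList _).trans ?_
      refine (Finset.toList_insert hm).trans ?_
      refine List.Perm.trans ?_ (List.perm_append_comm (l₁ := [m]))
      exact List.Perm.cons m (S.sort_perm_toList _).symm
    · exact Finset.pairwise_sort _ _
    · rw [List.pairwise_append]
      refine ⟨Finset.pairwise_sort _ _, by simp, ?_⟩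
      intro a ha b hb'
      simp only [List.mem_singleton] at hb'
      subst hb'
      exact le_of_lt (hb a (by rwa [Finset.mem_sort] at ha))
  rw [colL, h1, List.reverse_append]
  simp [colL]

end ColList

section Es
variable {R : Type*} [Ring R] (x : ℕ → R)

/-- noncommutative elementary symmetric polynomial in `x 0, …, x (m-1)`:
sum over all strictly decreasing words of length `k`. -/
def Es (m k : ℕ) : R := ∑ S ∈ (Finset.range m).powersetCard k, Pw x (colL S)

@[simp] lemma Es_zero (m : ℕ) : Es x m 0 = 1 := by
  simp [Es, Finset.powersetCard_zero]

@[simp] lemma Es_nil (k : ℕ) : Es x 0 (k + 1) = 0 := by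
  rw [Es]
  rw [Finset.powersetCard_eq_empty.2 (by simp)]
  simp

lemma Es_of_lt {m k : ℕ} (h : m < k) : Es x m k = 0 := by
  rw [Es, Finset.powersetCard_eq_empty.2 (by simpa using h)]
  simp

lemma Es_succ (m k : ℕ) : Es x (m + 1) (k + 1) = Es x m (k + 1) + x m * Es x m k := by
  have hm : m ∉ Finset.range m := by simp
  rw [Es, Finset.range_add_one, Finset.powersetCard_succ_insert hm]
  rw [Finset.sum_union]
  · congr 1
    rw [Finset.sum_image, Es, Finset.mul_sum]
    · apply Finset.sum_congr rfl
      intro S hS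
      have hb : ∀ a ∈ S, a < m := by
        intro a ha
        have := Finset.mem_powersetCard.1 hS
        exact Finset.mem_range.1 (this.1 ha)
      rw [colL_insert m S hb, Pw_cons]
    · intro S hS T hT hST
      have hS' : m ∉ S := fun h =>
        (by simpa using (Finset.mem_powersetCard.1 hS).1 h : m < m).false
      have hT' : m ∉ T := fun h =>
        (by simpa using (Finset.mem_powersetCard.1 hT).1 h : m < m).false
      have := congrArg (fun (U : Finset ℕ) => U.erase m) hST
      simpa [Finset.erase_insert hS', Finset.erase_insert hT'] using this
  · rw [Finset.disjoint_left]
    intro S hS hS'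
    have h1 : m ∉ S := fun h =>
      (by simpa using (Finset.mem_powersetCard.1 hS).1 h : m < m).false
    obtain ⟨T, _, rfl⟩ := Finset.mem_image.1 hS'
    exact h1 (Finset.mem_insert_self m T)

lemma Es_map {S : Type*} [Ring S] (f : R →+* S) (m k : ℕ) :
    f (Es x m k) = Es (fun i => f (x i)) m k := by
  rw [Es, map_sum, Es]
  refine Finset.sum_congr rfl fun S _ => ?_
  rw [Pw, Pw, map_list_prod, List.map_map]
  rfl

variable (hK2 : ∀ a b c : ℕ, a < b → b ≤ c → x b * x a * x c = x b * x c * x a)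

include hK2 in
lemma Es_L1 (m k n : ℕ) (h : m ≤ n) : x n * Es x m k * x n = x n * x n * Es x m k := by
  rw [Es, Finset.mul_sum, Finset.sum_mul, Finset.mul_sum]
  apply Finset.sum_congr rfl
  intro S hS
  exact L1w x hK2 _ n (colL_pairwise S) (fun a ha => by
    have := (Finset.mem_powersetCard.1 hS).1 (mem_colL.1 ha)
    exact lt_of_lt_of_le (Finset.mem_range.1 this) h)

include hK2 in
lemma Es_swap (m k β w : ℕ) (h : m ≤ β) (hw : β ≤ w) :
    x β * Es x m k * x w = x β * x w * Es x m k := by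
  rw [Es, Finset.mul_sum, Finset.sum_mul, Finset.mul_sum]
  apply Finset.sum_congr rfl
  intro S hS
  exact swapW x hK2 _ β w (colL_pairwise S) (fun a ha => by
    have := (Finset.mem_powersetCard.1 hS).1 (mem_colL.1 ha)
    exact lt_of_lt_of_le (Finset.mem_range.1 this) h) hw

end Es

section Master
variable {C : Type*} {R : Type*} [CommRing C] [Ring R] [Algebra C R]
variable (x : ℕ → R) (τ σ : C)

/-- generating function of the noncommutative elementary symmetric polynomials -/
def Dgen (z : C) (m : ℕ) : R := ∑ k ∈ Finset.range (m + 1), z ^ k • Es x m k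

@[simp] lemma Dgen_zero (z : C) : Dgen x z 0 = 1 := by
  simp [Dgen]

lemma Dgen_succ (z : C) (m : ℕ) :
    Dgen x z (m + 1) = Dgen x z m + z • (x m * Dgen x z m) := by
  rw [Dgen, Finset.sum_range_succ' (fun k => z ^ k • Es x (m+1) k)]
  have h1 : ∀ k, z ^ (k+1) • Es x (m+1) (k+1)
      = z ^ (k+1) • Es x m (k+1) + z ^ (k+1) • (x m * Es x m k) := by
    intro k; rw [Es_succ, smul_add]
  simp only [h1, Finset.sum_add_distrib]
  have h2 : ∑ k ∈ Finset.range (m+1), z ^ (k+1) • Es x m (k+1) + (z ^ 0 • Es x (m+1) 0)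
      = Dgen x z m := by
    rw [Dgen, Finset.sum_range_succ' (fun k => z ^ k • Es x m k)]
    rw [Finset.sum_range_succ]
    simp [Es_of_lt x (Nat.lt_succ_self m)]
  have h3 : ∑ k ∈ Finset.range (m+1), z ^ (k+1) • (x m * Es x m k)
      = z • (x m * Dgen x z m) := by
    rw [Dgen, Finset.mul_sum, Finset.smul_sum]
    apply Finset.sum_congr rfl
    intro k _
    rw [mul_smul_comm, smul_smul, pow_succ, mul_comm]
  rw [add_assoc, add_comm (∑ k ∈ Finset.range (m+1), z ^ (k+1) • (x m * Es x m k)), ← add_assoc,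
    h2, h3]

variable (hK2 : ∀ a b c : ℕ, a < b → b ≤ c → x b * x a * x c = x b * x c * x a)

include hK2 in
lemma Dgen_L1 (z : C) (m k : ℕ) (h : m ≤ k) :
    x k * Dgen x z m * x k = x k * x k * Dgen x z m := by
  rw [Dgen, Finset.mul_sum, Finset.sum_mul, Finset.mul_sum]
  apply Finset.sum_congr rfl
  intro j _
  rw [mul_smul_comm (z^j) (x k) (Es x m j), smul_mul_assoc, mul_smul_comm]
  rw [Es_L1 x hK2 m j k h]

include hK2 in
lemma Dgen_swap (z : C) (m β w : ℕ) (h : m ≤ β) (hw : β ≤ w) :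
    x β * Dgen x z m * x w = x β * x w * Dgen x z m := by
  rw [Dgen, Finset.mul_sum, Finset.sum_mul, Finset.mul_sum]
  apply Finset.sum_congr rfl
  intro j _
  rw [mul_smul_comm (z^j) (x β) (Es x m j), smul_mul_assoc, mul_smul_comm]
  rw [Es_swap x hK2 m j β w h hw]

/-- the right-hand side of the master identity -/
def RSsum (m : ℕ) (W : List ℕ) : R :=
  ∑ k ∈ Finset.range W.length,
    (σ ^ k * τ ^ (W.length - 1 - k)) •
      (Pw x (W.take (k+1)) * (Dgen x σ m * (Pw x (W.drop (k+1)) * Dgen x τ m)))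

end Master

section MasterThm
variable {C : Type*} {R : Type*} [CommRing C] [Ring R] [Algebra C R]
variable (x : ℕ → R) (τ σ : C)
variable (hK1 : ∀ a b c : ℕ, a ≤ b → b < c → x a * x c * x b = x c * x a * x b)
variable (hK2 : ∀ a b c : ℕ, a < b → b ≤ c → x b * x a * x c = x b * x c * x a)

include hK1 hK2 in
theorem master : ∀ (m : ℕ) (W : List ℕ), W.Pairwise (· > ·) → (∀ w ∈ W, m ≤ w) →
    σ ^ W.length • (Dgen x τ m * (Pw x W * Dgen x σ m))
      - τ ^ W.length • (Dgen x σ m * (Pw x W * Dgen x τ m))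
    = (σ - τ) • RSsum x τ σ m W := by
  intro m
  induction m with
  | zero =>
      intro W _ _
      rw [RSsum]
      simp only [Dgen_zero, one_mul, mul_one]
      have h1 : ∀ k ∈ Finset.range W.length,
          (σ ^ k * τ ^ (W.length - 1 - k)) •
            (Pw x (W.take (k+1)) * Pw x (W.drop (k+1)))
          = (σ ^ k * τ ^ (W.length - 1 - k)) • Pw x W := by
        intro k _
        rw [← Pw_append, List.take_append_drop]
      rw [Finset.sum_congr rfl h1, ← Finset.sum_smul, smul_smul, ← sub_smul]
      congr 1
      rw [mul_comm, ← geom_sum₂_mul σ τ W.length]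
  | succ m ih =>
      intro W hP hb
      have hbm : ∀ w ∈ W, m ≤ w := fun w hw => le_trans (Nat.le_succ m) (hb w hw)
      have hbm' : ∀ w ∈ W, m < w := fun w hw => hb w hw
      -- commutation at level m (the W = [] instance of ih)
      have hcomm : Dgen x τ m * Dgen x σ m = Dgen x σ m * Dgen x τ m := by
        have h0 := ih [] (by simp) (by simp)
        simp only [List.length_nil, pow_zero, one_smul, Pw_nil, one_mul, RSsum,
          Finset.range_zero, Finset.sum_empty, smul_zero, sub_eq_zero] at h0
        exact h0
      -- the key degree-one instance at level m
      have hkey : σ • (Dgen x τ m * (x m * Dgen x σ m))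
            - τ • (Dgen x σ m * (x m * Dgen x τ m))
          = (σ - τ) • (x m * (Dgen x σ m * Dgen x τ m)) := by
        have h1 := ih [m] (by simp) (by simp)
        simpa [RSsum] using h1
      -- quadratic moves
      have hq1 : x m * (Dgen x τ m * (x m * Dgen x σ m))
          = x m * (x m * (Dgen x τ m * Dgen x σ m)) := by
        have := Dgen_L1 x hK2 τ m m le_rfl
        calc x m * (Dgen x τ m * (x m * Dgen x σ m))
            = (x m * Dgen x τ m * x m) * Dgen x σ m := by simp [mul_assoc]
          _ = (x m * x m * Dgen x τ m) * Dgen x σ m := by rw [this]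
          _ = x m * (x m * (Dgen x τ m * Dgen x σ m)) := by simp [mul_assoc]
      have hq2 : x m * (Dgen x σ m * (x m * Dgen x τ m))
          = x m * (x m * (Dgen x σ m * Dgen x τ m)) := by
        have := Dgen_L1 x hK2 σ m m le_rfl
        calc x m * (Dgen x σ m * (x m * Dgen x τ m))
            = (x m * Dgen x σ m * x m) * Dgen x τ m := by simp [mul_assoc]
          _ = (x m * x m * Dgen x σ m) * Dgen x τ m := by rw [this]
          _ = x m * (x m * (Dgen x σ m * Dgen x τ m)) := by simp [mul_assoc]
      match W, hP, hb with
      | [], _, _ =>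
          -- goal is commutation at level m+1
          simp only [List.length_nil, pow_zero, one_smul, Pw_nil, one_mul, RSsum,
            Finset.range_zero, Finset.sum_empty, smul_zero, sub_eq_zero]
          rw [Dgen_succ, Dgen_succ]
          have expL : (Dgen x τ m + τ • (x m * Dgen x τ m)) * (Dgen x σ m + σ • (x m * Dgen x σ m))
              = Dgen x τ m * Dgen x σ m + σ • (Dgen x τ m * (x m * Dgen x σ m))
                + τ • (x m * (Dgen x τ m * Dgen x σ m))
                + (τ * σ) • (x m * (Dgen x τ m * (x m * Dgen x σ m))) := by
            simp only [mul_add, add_mul, smul_mul_assoc, mul_smul_comm, smul_smul, mul_assoc]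
            module
          have expR : (Dgen x σ m + σ • (x m * Dgen x σ m)) * (Dgen x τ m + τ • (x m * Dgen x τ m))
              = Dgen x σ m * Dgen x τ m + τ • (Dgen x σ m * (x m * Dgen x τ m))
                + σ • (x m * (Dgen x σ m * Dgen x τ m))
                + (σ * τ) • (x m * (Dgen x σ m * (x m * Dgen x τ m))) := by
            simp only [mul_add, add_mul, smul_mul_assoc, mul_smul_comm, smul_smul, mul_assoc]
            module
          rw [expL, expR]
          have e1 : σ • (Dgen x τ m * (x m * Dgen x σ m))
              + τ • (x m * (Dgen x τ m * Dgen x σ m))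
              = τ • (Dgen x σ m * (x m * Dgen x τ m))
              + σ • (x m * (Dgen x σ m * Dgen x τ m)) := by
            have h2 : τ • (x m * (Dgen x τ m * Dgen x σ m))
                = τ • (x m * (Dgen x σ m * Dgen x τ m)) := by rw [hcomm]
            rw [h2]
            have := hkey
            -- σ•A - τ•B = (σ-τ)•Z  ⟹  σ•A + τ•Z = τ•B + σ•Z
            linear_combination (norm := module) this
          have e2 : (τ * σ) • (x m * (Dgen x τ m * (x m * Dgen x σ m)))
              = (σ * τ) • (x m * (Dgen x σ m * (x m * Dgen x τ m))) := by
            rw [hq1, hq2, hcomm, mul_comm τ σ]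
          -- assemble
          calc Dgen x τ m * Dgen x σ m + σ • (Dgen x τ m * (x m * Dgen x σ m))
                + τ • (x m * (Dgen x τ m * Dgen x σ m))
                + (τ * σ) • (x m * (Dgen x τ m * (x m * Dgen x σ m)))
              = Dgen x σ m * Dgen x τ m
                + (σ • (Dgen x τ m * (x m * Dgen x σ m))
                  + τ • (x m * (Dgen x τ m * Dgen x σ m)))
                + (τ * σ) • (x m * (Dgen x τ m * (x m * Dgen x σ m))) := by
                rw [hcomm]; abel
            _ = Dgen x σ m * Dgen x τ m
                + (τ • (Dgen x σ m * (x m * Dgen x τ m))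
                  + σ • (x m * (Dgen x σ m * Dgen x τ m)))
                + (σ * τ) • (x m * (Dgen x σ m * (x m * Dgen x τ m))) := by
                rw [e1, e2]
            _ = Dgen x σ m * Dgen x τ m + τ • (Dgen x σ m * (x m * Dgen x τ m))
                + σ • (x m * (Dgen x σ m * Dgen x τ m))
                + (σ * τ) • (x m * (Dgen x σ m * (x m * Dgen x τ m))) := by abel
      | (w₀ :: W'), hP, hb => ?_
      case _ =>
        set n := W'.length with hn
        set W : List ℕ := w₀ :: W' with hWdef
        have hLen : W.length = n + 1 := by simp [hWdef, hn]
        have hbm2 : ∀ w ∈ W, m ≤ w := fun w hw => le_trans (Nat.le_succ m) (hb w hw)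
        have hblt : ∀ w ∈ W, m < w := fun w hw => hb w hw
        have hPairTake : ∀ j, (W.take j).Pairwise (· > ·) :=
          fun j => List.Pairwise.sublist (List.take_sublist j W) hP
        have htkmem : ∀ (j : ℕ), j < W.length → ∀ v ∈ W.take j, W[j]! < v := by
          intro j hj v hv
          rw [List.mem_take_iff_getElem] at hv
          obtain ⟨i, hi, rfl⟩ := hv
          have hij : i < j := (lt_min_iff.1 hi).1
          rw [getElem!_pos W j hj]
          exact List.pairwise_iff_getElem.1 hP i j (lt_trans hij hj) hj hij
        have hmemW : ∀ (j : ℕ), j < W.length → m ≤ W[j]! := by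
          intro j hj
          rw [getElem!_pos W j hj]
          exact le_trans (Nat.le_succ m) (hb _ (List.getElem_mem hj))
        have swap_mid : ∀ (Z : R) (w' : ℕ), m ≤ w' →
            x m * (Dgen x σ m * (x w' * Z)) = x m * (x w' * (Dgen x σ m * Z)) := by
          intro Z w' hw'
          have h := Dgen_swap x hK2 σ m m w' le_rfl hw'
          calc x m * (Dgen x σ m * (x w' * Z)) = (x m * Dgen x σ m * x w') * Z := by
                simp [mul_assoc]
            _ = (x m * x w' * Dgen x σ m) * Z := by rw [h]
            _ = x m * (x w' * (Dgen x σ m * Z)) := by simp [mul_assoc]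
        have bubble_gen : ∀ (V : List ℕ) (w' : ℕ) (Y : R), V.Pairwise (· > ·) →
            (∀ v ∈ V, w' < v) → m ≤ w' →
            Pw x V * (x m * (x w' * Y)) = x m * (Pw x V * (x w' * Y)) := by
          intro V w' Y hp hv hw
          have h := bubbleLw x hK1 V m w' hp hv hw
          calc Pw x V * (x m * (x w' * Y)) = (Pw x V * (x m * x w')) * Y := by
                simp [mul_assoc]
            _ = (x m * Pw x V * x w') * Y := by rw [← h]
            _ = x m * (Pw x V * (x w' * Y)) := by simp [mul_assoc]
        have htake2 : ∀ (k : ℕ), k + 1 < W.length → W.take (k+1+1) = W.take (k+1) ++ [W[k+1]!] := by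
          intro k hk
          rw [getElem!_pos W (k+1) hk, List.take_succ, List.getElem?_eq_getElem hk]
          rfl
        have hdrop1 : ∀ (k : ℕ), k + 1 < W.length → W.drop (k+1) = W[k+1]! :: W.drop (k+1+1) := by
          intro k hk
          rw [getElem!_pos W (k+1) hk]
          exact List.drop_eq_getElem_cons hk
        -- the per-k word move
        have move : ∀ (k : ℕ), k < n → ∀ (Tail : R),
            Pw x (W.take (k+1)) * (x m * (Dgen x σ m * (Pw x (W.drop (k+1)) * Tail)))
            = x m * (Pw x (W.take (k+1+1)) * (Dgen x σ m * (Pw x (W.drop (k+1+1)) * Tail))) := by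
          intro k hk Tail
          have hk1 : k + 1 < W.length := by rw [hLen]; omega
          rw [htake2 k hk1, Pw_append x, Pw_singleton]
          rw [hdrop1 k hk1, Pw_cons]
          calc Pw x (W.take (k+1)) * (x m * (Dgen x σ m * ((x W[k+1]! * Pw x (W.drop (k+1+1))) * Tail)))
              = Pw x (W.take (k+1)) * (x m * (Dgen x σ m * (x W[k+1]! * (Pw x (W.drop (k+1+1)) * Tail)))) := by
                simp [mul_assoc]
            _ = Pw x (W.take (k+1)) * (x m * (x W[k+1]! * (Dgen x σ m * (Pw x (W.drop (k+1+1)) * Tail)))) := by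
                rw [swap_mid _ _ (hmemW (k+1) hk1)]
            _ = x m * (Pw x (W.take (k+1)) * (x W[k+1]! * (Dgen x σ m * (Pw x (W.drop (k+1+1)) * Tail)))) := by
                rw [bubble_gen _ _ _ (hPairTake (k+1)) (htkmem (k+1) hk1) (hmemW (k+1) hk1)]
            _ = x m * ((Pw x (W.take (k+1)) * x W[k+1]!) * (Dgen x σ m * (Pw x (W.drop (k+1+1)) * Tail))) := by
                simp [mul_assoc]
        -- IH instances
        have ihW := ih W hP hbm2
        rw [hLen] at ihW
        have hWm_pair : (W ++ [m]).Pairwise (· > ·) := by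
          rw [List.pairwise_append]
          refine ⟨hP, by simp, ?_⟩
          intro a ha c hc
          simp only [List.mem_singleton] at hc
          subst hc
          exact hblt a ha
        have hWm_low : ∀ w ∈ W ++ [m], m ≤ w := by
          intro w hw
          rcases List.mem_append.1 hw with h | h
          · exact hbm2 w h
          · simp only [List.mem_singleton] at h; omega
        have ihWb := ih (W ++ [m]) hWm_pair hWm_low
        have hL2 : (W ++ [m]).length = n + 2 := by simp [hLen]
        rw [hL2] at ihWb
        have hPwb : Pw x (W ++ [m]) = Pw x W * x m := by rw [Pw_append, Pw_singleton]
        rw [hPwb] at ihWb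
        have ihWb' : σ^(n+2) • (Dgen x τ m * (Pw x W * (x m * Dgen x σ m)))
            - τ^(n+2) • (Dgen x σ m * (Pw x W * (x m * Dgen x τ m)))
            = (σ - τ) • RSsum x τ σ m (W ++ [m]) := by
          rw [← ihWb]; congr 2 <;> simp [mul_assoc]
        have hbIH1 : σ^(n+1) • (x m * (Dgen x τ m * (Pw x W * Dgen x σ m)))
            - τ^(n+1) • (x m * (Dgen x σ m * (Pw x W * Dgen x τ m)))
            = (σ - τ) • (x m * RSsum x τ σ m W) := by
          have h := congrArg (fun z => x m * z) ihW
          simpa only [mul_sub, mul_smul_comm] using h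
        have hbIH2 : σ^(n+2) • (x m * (Dgen x τ m * (Pw x W * (x m * Dgen x σ m))))
            - τ^(n+2) • (x m * (Dgen x σ m * (Pw x W * (x m * Dgen x τ m))))
            = (σ - τ) • (x m * RSsum x τ σ m (W ++ [m])) := by
          have h := congrArg (fun z => x m * z) ihWb'
          simpa only [mul_sub, mul_smul_comm] using h
        -- the combinatorial main identity
        have hmain : RSsum x τ σ (m+1) W
            = RSsum x τ σ m W + RSsum x τ σ m (W ++ [m])
              + (τ • (x m * RSsum x τ σ m W)
                  - τ^(n+1) • (x m * (Dgen x σ m * (Pw x W * Dgen x τ m))))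
              + (τ • (x m * RSsum x τ σ m (W ++ [m]))
                  - τ^(n+2) • (x m * (Dgen x σ m * (Pw x W * (x m * Dgen x τ m))))) := by
          -- canonical sum decomposition pieces
          have hS1 : RSsum x τ σ m W = ∑ k ∈ Finset.range (n+1), (σ^k*τ^(n-k)) •
              (Pw x (W.take (k+1)) * (Dgen x σ m * (Pw x (W.drop (k+1)) * Dgen x τ m))) := by
            rw [RSsum, hLen]
            simp only [Nat.add_sub_cancel]
          have hS2 : RSsum x τ σ m (W ++ [m]) = (∑ k ∈ Finset.range (n+1), (σ^k*τ^(n+1-k)) •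
                (Pw x (W.take (k+1)) * (Dgen x σ m * (Pw x (W.drop (k+1)) * (x m * Dgen x τ m)))))
              + σ^(n+1) • (Pw x W * (x m * (Dgen x σ m * Dgen x τ m))) := by
            rw [RSsum, hL2]
            simp only [show n+2-1 = n+1 from rfl]
            rw [Finset.sum_range_succ]
            congr 1
            · refine Finset.sum_congr rfl ?_
              intro k hk
              have hk' : k + 1 ≤ W.length := by rw [hLen]; exact Finset.mem_range.1 hk
              rw [List.take_append_of_le_length hk', List.drop_append_of_le_length hk',
                Pw_append x (W.drop (k+1)), Pw_singleton]
              congr 1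
              simp [mul_assoc]
            · have ht : (W ++ [m]).take (n+1+1) = W ++ [m] := by
                apply List.take_of_length_le
                rw [hL2]
              have hd : (W ++ [m]).drop (n+1+1) = [] := by
                apply List.drop_eq_nil_of_le
                rw [hL2]
              rw [ht, hd, Pw_nil, Pw_append x W, Pw_singleton]
              rw [Nat.sub_self, pow_zero, mul_one]
              congr 1
              simp [mul_assoc]
          have hbS1 : τ • (x m * RSsum x τ σ m W)
              = (∑ k ∈ Finset.range n, (σ^(k+1)*τ^(n-k)) •
                  (x m * (Pw x (W.take (k+1+1)) * (Dgen x σ m * (Pw x (W.drop (k+1+1)) * Dgen x τ m)))))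
                + τ^(n+1) • (x m * (Pw x (W.take (0+1)) * (Dgen x σ m * (Pw x (W.drop (0+1)) * Dgen x τ m)))) := by
            rw [hS1, Finset.mul_sum, Finset.smul_sum]
            have hbody : ∀ k, τ • (x m * ((σ^k*τ^(n-k)) •
                (Pw x (W.take (k+1)) * (Dgen x σ m * (Pw x (W.drop (k+1)) * Dgen x τ m)))))
                = (τ*(σ^k*τ^(n-k))) •
                  (x m * (Pw x (W.take (k+1)) * (Dgen x σ m * (Pw x (W.drop (k+1)) * Dgen x τ m)))) := by
              intro k
              rw [mul_smul_comm, smul_smul]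
            simp only [hbody]
            rw [Finset.sum_range_succ']
            congr 1
            · refine Finset.sum_congr rfl ?_
              intro k hk
              have hk' : k < n := Finset.mem_range.1 hk
              congr 1
              rw [show n - k = (n - (k+1)) + 1 from by omega]
              ring
            · congr 1
              rw [Nat.sub_zero]
              ring
          have hbS2 : τ • (x m * RSsum x τ σ m (W ++ [m]))
              = (∑ k ∈ Finset.range n, (σ^(k+1)*τ^(n+1-k)) •
                  (x m * (Pw x (W.take (k+1+1)) * (Dgen x σ m * (Pw x (W.drop (k+1+1)) * (x m * Dgen x τ m))))))
                + (σ^(n+1)*τ) • (x m * (Pw x W * (x m * (Dgen x σ m * Dgen x τ m))))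
                + τ^(n+2) • (x m * (Pw x (W.take (0+1)) * (Dgen x σ m * (Pw x (W.drop (0+1)) * (x m * Dgen x τ m))))) := by
            rw [hS2, mul_add, smul_add, Finset.mul_sum, Finset.smul_sum]
            have hbody : ∀ k, τ • (x m * ((σ^k*τ^(n+1-k)) •
                (Pw x (W.take (k+1)) * (Dgen x σ m * (Pw x (W.drop (k+1)) * (x m * Dgen x τ m))))))
                = (τ*(σ^k*τ^(n+1-k))) •
                  (x m * (Pw x (W.take (k+1)) * (Dgen x σ m * (Pw x (W.drop (k+1)) * (x m * Dgen x τ m))))) := by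
              intro k
              rw [mul_smul_comm, smul_smul]
            simp only [hbody]
            rw [Finset.sum_range_succ']
            have e1 : ∀ k ∈ Finset.range n, (τ*(σ^(k+1)*τ^(n+1-(k+1)))) •
                (x m * (Pw x (W.take (k+1+1)) * (Dgen x σ m * (Pw x (W.drop (k+1+1)) * (x m * Dgen x τ m)))))
                = (σ^(k+1)*τ^(n+1-k)) •
                (x m * (Pw x (W.take (k+1+1)) * (Dgen x σ m * (Pw x (W.drop (k+1+1)) * (x m * Dgen x τ m))))) := by
              intro k hk
              have hk' : k < n := Finset.mem_range.1 hk
              congr 1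
              rw [show n + 1 - k = (n + 1 - (k+1)) + 1 from by omega]
              ring
            have e2 : (τ*(σ^0*τ^(n+1-0))) •
                (x m * (Pw x (W.take (0+1)) * (Dgen x σ m * (Pw x (W.drop (0+1)) * (x m * Dgen x τ m)))))
                = τ^(n+2) •
                (x m * (Pw x (W.take (0+1)) * (Dgen x σ m * (Pw x (W.drop (0+1)) * (x m * Dgen x τ m))))) := by
              congr 1
              rw [Nat.sub_zero]
              ring
            have e3 : τ • (x m * (σ^(n+1) • (Pw x W * (x m * (Dgen x σ m * Dgen x τ m)))))
                = (σ^(n+1)*τ) • (x m * (Pw x W * (x m * (Dgen x σ m * Dgen x τ m)))) := by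
              rw [mul_smul_comm, smul_smul]
              congr 1
              ring
            rw [Finset.sum_congr rfl e1, e2, e3]
            abel
          -- word move equalities
          have hmv3 : ∀ k ∈ Finset.range n,
              (σ^(k+1)*τ^(n-k)) • (x m * (Pw x (W.take (k+1+1)) * (Dgen x σ m * (Pw x (W.drop (k+1+1)) * Dgen x τ m))))
              = (σ^(k+1)*τ^(n-k)) • (Pw x (W.take (k+1)) * (x m * (Dgen x σ m * (Pw x (W.drop (k+1)) * Dgen x τ m)))) := by
            intro k hk
            rw [← move k (Finset.mem_range.1 hk) (Dgen x τ m)]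
          have hmv4 : ∀ k ∈ Finset.range n,
              (σ^(k+1)*τ^(n+1-k)) • (x m * (Pw x (W.take (k+1+1)) * (Dgen x σ m * (Pw x (W.drop (k+1+1)) * (x m * Dgen x τ m)))))
              = (σ^(k+1)*τ^(n+1-k)) • (Pw x (W.take (k+1)) * (x m * (Dgen x σ m * (Pw x (W.drop (k+1)) * (x m * Dgen x τ m))))) := by
            intro k hk
            rw [← move k (Finset.mem_range.1 hk) (x m * Dgen x τ m)]
          -- boundary identities
          have hTake1 : W.take (0+1) = [w₀] := by rw [hWdef]; rfl
          have hDrop1 : W.drop (0+1) = W' := by rw [hWdef]; rfl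
          have hw0 : m ≤ w₀ := le_trans (Nat.le_succ m) (hb w₀ (by rw [hWdef]; simp))
          have hbd3 : x m * (Pw x (W.take (0+1)) * (Dgen x σ m * (Pw x (W.drop (0+1)) * Dgen x τ m)))
              = x m * (Dgen x σ m * (Pw x W * Dgen x τ m)) := by
            rw [hTake1, hDrop1, Pw_singleton]
            conv_rhs => rw [hWdef]
            rw [Pw_cons]
            calc x m * (x w₀ * (Dgen x σ m * (Pw x W' * Dgen x τ m)))
                = x m * (x w₀ * (Dgen x σ m * (Pw x W' * Dgen x τ m))) := rfl
              _ = x m * (Dgen x σ m * (x w₀ * (Pw x W' * Dgen x τ m))) := by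
                  rw [← swap_mid (Pw x W' * Dgen x τ m) w₀ hw0]
              _ = x m * (Dgen x σ m * (x w₀ * Pw x W' * Dgen x τ m)) := by
                  simp [mul_assoc]
          have hbd4 : x m * (Pw x (W.take (0+1)) * (Dgen x σ m * (Pw x (W.drop (0+1)) * (x m * Dgen x τ m))))
              = x m * (Dgen x σ m * (Pw x W * (x m * Dgen x τ m))) := by
            rw [hTake1, hDrop1, Pw_singleton]
            conv_rhs => rw [hWdef]
            rw [Pw_cons]
            calc x m * (x w₀ * (Dgen x σ m * (Pw x W' * (x m * Dgen x τ m))))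
                = x m * (Dgen x σ m * (x w₀ * (Pw x W' * (x m * Dgen x τ m)))) := by
                  rw [← swap_mid (Pw x W' * (x m * Dgen x τ m)) w₀ hw0]
              _ = x m * (Dgen x σ m * (x w₀ * Pw x W' * (x m * Dgen x τ m))) := by
                  simp [mul_assoc]
          have hbd5 : x m * (Pw x W * (x m * (Dgen x σ m * Dgen x τ m)))
              = Pw x W * (x m * (Dgen x σ m * (x m * Dgen x τ m))) := by
            have h1 : x m * Pw x W * x m = Pw x W * (x m * x m) :=
              bubbleLw x hK1 W m m hP hblt le_rfl
            have h2 : x m * Dgen x σ m * x m = x m * x m * Dgen x σ m :=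
              Dgen_L1 x hK2 σ m m le_rfl
            calc x m * (Pw x W * (x m * (Dgen x σ m * Dgen x τ m)))
                = (x m * Pw x W * x m) * (Dgen x σ m * Dgen x τ m) := by simp [mul_assoc]
              _ = (Pw x W * (x m * x m)) * (Dgen x σ m * Dgen x τ m) := by rw [h1]
              _ = Pw x W * ((x m * x m * Dgen x σ m) * Dgen x τ m) := by simp [mul_assoc]
              _ = Pw x W * ((x m * Dgen x σ m * x m) * Dgen x τ m) := by rw [h2]
              _ = Pw x W * (x m * (Dgen x σ m * (x m * Dgen x τ m))) := by simp [mul_assoc]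
          -- the SC and SD boundary normalizations
          have hCcLast : Pw x (W.take (n+1)) * (x m * (Dgen x σ m * (Pw x (W.drop (n+1)) * Dgen x τ m)))
              = Pw x W * (x m * (Dgen x σ m * Dgen x τ m)) := by
            have ht : W.take (n+1) = W := by
              apply List.take_of_length_le
              rw [hLen]
            have hd : W.drop (n+1) = [] := by
              apply List.drop_eq_nil_of_le
              rw [hLen]
            rw [ht, hd, Pw_nil, one_mul]
          have hDdLast : Pw x (W.take (n+1)) * (x m * (Dgen x σ m * (Pw x (W.drop (n+1)) * (x m * Dgen x τ m))))
              = Pw x W * (x m * (Dgen x σ m * (x m * Dgen x τ m))) := by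
            have ht : W.take (n+1) = W := by
              apply List.take_of_length_le
              rw [hLen]
            have hd : W.drop (n+1) = [] := by
              apply List.drop_eq_nil_of_le
              rw [hLen]
            rw [ht, hd, Pw_nil, one_mul]
          -- expansion of RSsum (m+1) W
          have hRS : RSsum x τ σ (m+1) W
              = (∑ k ∈ Finset.range (n+1), (σ^k*τ^(n-k)) •
                  (Pw x (W.take (k+1)) * (Dgen x σ m * (Pw x (W.drop (k+1)) * Dgen x τ m))))
              + (∑ k ∈ Finset.range (n+1), (σ^k*τ^(n+1-k)) •
                  (Pw x (W.take (k+1)) * (Dgen x σ m * (Pw x (W.drop (k+1)) * (x m * Dgen x τ m)))))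
              + (∑ k ∈ Finset.range (n+1), (σ^(k+1)*τ^(n-k)) •
                  (Pw x (W.take (k+1)) * (x m * (Dgen x σ m * (Pw x (W.drop (k+1)) * Dgen x τ m)))))
              + (∑ k ∈ Finset.range (n+1), (σ^(k+1)*τ^(n+1-k)) •
                  (Pw x (W.take (k+1)) * (x m * (Dgen x σ m * (Pw x (W.drop (k+1)) * (x m * Dgen x τ m)))))) := by
            rw [RSsum, hLen, Dgen_succ x σ m, Dgen_succ x τ m]
            simp only [Nat.add_sub_cancel]
            rw [← Finset.sum_add_distrib, ← Finset.sum_add_distrib, ← Finset.sum_add_distrib]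
            refine Finset.sum_congr rfl ?_
            intro k hk
            have hk' : k < n + 1 := Finset.mem_range.1 hk
            rw [show n + 1 - k = (n - k) + 1 from by omega]
            simp only [mul_add, add_mul, smul_add, smul_mul_assoc, mul_smul_comm, smul_smul,
              mul_assoc]
            module
          -- split the third and fourth sums
          have hSC : (∑ k ∈ Finset.range (n+1), (σ^(k+1)*τ^(n-k)) •
                  (Pw x (W.take (k+1)) * (x m * (Dgen x σ m * (Pw x (W.drop (k+1)) * Dgen x τ m)))))
              = (∑ k ∈ Finset.range n, (σ^(k+1)*τ^(n-k)) •
                  (Pw x (W.take (k+1)) * (x m * (Dgen x σ m * (Pw x (W.drop (k+1)) * Dgen x τ m)))))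
                + σ^(n+1) • (Pw x W * (x m * (Dgen x σ m * Dgen x τ m))) := by
            rw [Finset.sum_range_succ, hCcLast]
            congr 1
            rw [Nat.sub_self, pow_zero, mul_one]
          have hSD : (∑ k ∈ Finset.range (n+1), (σ^(k+1)*τ^(n+1-k)) •
                  (Pw x (W.take (k+1)) * (x m * (Dgen x σ m * (Pw x (W.drop (k+1)) * (x m * Dgen x τ m))))))
              = (∑ k ∈ Finset.range n, (σ^(k+1)*τ^(n+1-k)) •
                  (Pw x (W.take (k+1)) * (x m * (Dgen x σ m * (Pw x (W.drop (k+1)) * (x m * Dgen x τ m))))))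
                + (σ^(n+1)*τ) • (Pw x W * (x m * (Dgen x σ m * (x m * Dgen x τ m)))) := by
            rw [Finset.sum_range_succ, hDdLast]
            congr 1
            rw [show n + 1 - n = 1 from by omega, pow_one]
          -- assemble
          rw [hRS, hSC, hSD, hbS1, hbS2, hS1, hS2]
          rw [Finset.sum_congr rfl hmv3, Finset.sum_congr rfl hmv4, hbd3, hbd4, hbd5]
          abel
        -- finish
        rw [hLen, Dgen_succ x τ m, Dgen_succ x σ m, hmain]
        simp only [mul_add, add_mul, smul_add, smul_mul_assoc, mul_smul_comm, smul_smul,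
          mul_assoc]
        linear_combination (norm := module) ihW + ihWb' + τ • hbIH1 + τ • hbIH2
end MasterThm

section Quot
open scoped TensorProduct

variable (N : ℕ)

/-- the quotient of the free algebra by the plactic ideal -/
noncomputable abbrev QP (N : ℕ) := (Iplac N).ringCon.Quotient

noncomputable def piP : FreeAlgebra ℚ (Fin N) →+* QP N := RingCon.mk' _

/-- the images of the generators, extended by `0` beyond `N` -/
noncomputable def xP : ℕ → QP N := fun i =>
  if h : i < N then piP N (FreeAlgebra.ι ℚ ⟨i, h⟩) else 0

lemma piP_eq_of_mem {z w : FreeAlgebra ℚ (Fin N)} (h : z - w ∈ Iplac N) :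
    piP N z = piP N w := by
  have h1 : (Iplac N).ringCon (z - w) 0 := ((Iplac N).mem_iff _).1 h
  have h2 : (Iplac N).ringCon z w := by
    simpa using (Iplac N).ringCon.add h1 ((Iplac N).ringCon.refl w)
  exact Quot.sound h2

lemma xP_K1 : ∀ a b c : ℕ, a ≤ b → b < c → xP N a * xP N c * xP N b = xP N c * xP N a * xP N b := by
  intro a b c hab hbc
  by_cases hc : c < N
  · have hb : b < N := lt_trans hbc hc
    have ha : a < N := lt_of_le_of_lt hab hb
    simp only [xP, dif_pos ha, dif_pos hb, dif_pos hc]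
    rw [← map_mul, ← map_mul, ← map_mul, ← map_mul]
    apply piP_eq_of_mem
    apply TwoSidedIdeal.subset_span
    exact Or.inl ⟨⟨a, ha⟩, ⟨b, hb⟩, ⟨c, hc⟩, hab, hbc, rfl⟩
  · simp [xP, dif_neg hc]

lemma xP_K2 : ∀ a b c : ℕ, a < b → b ≤ c → xP N b * xP N a * xP N c = xP N b * xP N c * xP N a := by
  intro a b c hab hbc
  by_cases hc : c < N
  · have hb : b < N := lt_of_le_of_lt hbc hc
    have ha : a < N := lt_trans hab hb
    simp only [xP, dif_pos ha, dif_pos hb, dif_pos hc]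
    rw [← map_mul, ← map_mul, ← map_mul, ← map_mul]
    apply piP_eq_of_mem
    apply TwoSidedIdeal.subset_span
    exact Or.inr ⟨⟨a, ha⟩, ⟨b, hb⟩, ⟨c, hc⟩, hab, hbc, rfl⟩
  · simp [xP, dif_neg hc]

set_option maxHeartbeats 2000000 in
set_option synthInstance.maxHeartbeats 1000000 in
/-- main commutation theorem in the plactic quotient -/
theorem Es_comm (k l : ℕ) :
    Es (xP N) N k * Es (xP N) N l = Es (xP N) N l * Es (xP N) N k := by
  rcases le_or_gt k N with hk | hk
  swap
  · rw [Es_of_lt _ hk]; simp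
  rcases le_or_gt l N with hl | hl
  swap
  · rw [Es_of_lt _ hl]; simp
  -- work in the tensor ring
  let Cp := MvPolynomial (Fin 2) ℚ
  let T := Cp ⊗[ℚ] QP N
  let incl : QP N →ₐ[ℚ] T := Algebra.TensorProduct.includeRight
  let x' : ℕ → T := fun i => incl (xP N i)
  have hK1' : ∀ a b c : ℕ, a ≤ b → b < c → x' a * x' c * x' b = x' c * x' a * x' b := by
    intro a b c h1 h2
    show incl _ * incl _ * incl _ = incl _ * incl _ * incl _
    rw [← map_mul, ← map_mul, ← map_mul, ← map_mul, xP_K1 N a b c h1 h2]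
  have hK2' : ∀ a b c : ℕ, a < b → b ≤ c → x' b * x' a * x' c = x' b * x' c * x' a := by
    intro a b c h1 h2
    show incl _ * incl _ * incl _ = incl _ * incl _ * incl _
    rw [← map_mul, ← map_mul, ← map_mul, ← map_mul, xP_K2 N a b c h1 h2]
  have hEs : ∀ j, Es x' N j = incl (Es (xP N) N j) := by
    intro j
    rw [show Es x' N j = Es (fun i => incl.toRingHom (xP N i)) N j from rfl,
      ← Es_map (xP N) incl.toRingHom N j]
    rfl
  have hcomm := master x' (MvPolynomial.X (0:Fin 2) : Cp) (MvPolynomial.X (1:Fin 2) : Cp) hK1' hK2' N [] (by simp)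
    (by simp)
  simp only [List.length_nil, pow_zero, one_smul, Pw_nil, one_mul, RSsum, Finset.range_zero,
    Finset.sum_empty, smul_zero, sub_eq_zero] at hcomm
  -- expand the product as a double sum of tensors
  have hprod : ∀ (z w : Cp) , Dgen x' z N * Dgen x' w N
      = ∑ p ∈ Finset.range (N+1) ×ˢ Finset.range (N+1),
          (z ^ p.1 * w ^ p.2) ⊗ₜ[ℚ] (Es (xP N) N p.1 * Es (xP N) N p.2) := by
    intro z w
    rw [Dgen, Dgen, Finset.sum_mul_sum, ← Finset.sum_product']
    refine Finset.sum_congr rfl ?_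
    intro p _
    rw [hEs, hEs, smul_mul_assoc, mul_smul_comm, smul_smul]
    rw [show incl (Es (xP N) N p.1) * incl (Es (xP N) N p.2)
        = incl (Es (xP N) N p.1 * Es (xP N) N p.2) from (map_mul incl _ _).symm]
    rw [show incl (Es (xP N) N p.1 * Es (xP N) N p.2)
        = 1 ⊗ₜ[ℚ] (Es (xP N) N p.1 * Es (xP N) N p.2) from rfl]
    rw [TensorProduct.smul_tmul']
    congr 1
    simp [smul_eq_mul]
  -- the coefficient-extraction linear map
  let μ : Fin 2 →₀ ℕ := Finsupp.single 0 k + Finsupp.single 1 l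
  let φ : T →ₗ[ℚ] QP N :=
    TensorProduct.lift ((LinearMap.lsmul ℚ (QP N)).comp (MvPolynomial.lcoeff ℚ μ))
  have hφ : ∀ (c : Cp) (q : QP N), φ (c ⊗ₜ[ℚ] q) = MvPolynomial.coeff μ c • q := by
    intro c q
    rw [show φ (c ⊗ₜ[ℚ] q)
      = ((LinearMap.lsmul ℚ (QP N)).comp (MvPolynomial.lcoeff ℚ μ)) c q from
        TensorProduct.lift.tmul c q]
    rfl
  have hsingle : ∀ j i : ℕ,
      (Finsupp.single (0 : Fin 2) j + Finsupp.single 1 i = μ) ↔ (j = k ∧ i = l) := by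
    intro j i
    constructor
    · intro h
      have h0 := DFunLike.congr_fun h (0 : Fin 2)
      have h1 := DFunLike.congr_fun h (1 : Fin 2)
      simp only [μ, Finsupp.add_apply, Finsupp.single_apply] at h0 h1
      constructor
      · simpa using h0
      · simpa using h1
    · rintro ⟨rfl, rfl⟩; rfl
  have hcoeff : ∀ j i : ℕ, MvPolynomial.coeff μ ((MvPolynomial.X (0 : Fin 2)) ^ j *
      (MvPolynomial.X (1 : Fin 2)) ^ i) = if j = k ∧ i = l then (1 : ℚ) else 0 := by
    intro j i
    rw [MvPolynomial.X_pow_eq_monomial, MvPolynomial.X_pow_eq_monomial,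
      MvPolynomial.monomial_mul, MvPolynomial.coeff_monomial]
    rw [one_mul]
    by_cases h : j = k ∧ i = l
    · rw [if_pos ((hsingle j i).2 h), if_pos h]
    · rw [if_neg (fun hh => h ((hsingle j i).1 hh)), if_neg h]
  -- apply φ to both sides of hcomm
  rw [hprod, hprod] at hcomm
  have happ := congrArg φ hcomm
  simp only [map_sum] at happ
  have hL : ∀ p ∈ Finset.range (N+1) ×ˢ Finset.range (N+1),
      φ ((MvPolynomial.X (0:Fin 2) ^ p.1 * MvPolynomial.X (1:Fin 2) ^ p.2)
        ⊗ₜ[ℚ] (Es (xP N) N p.1 * Es (xP N) N p.2))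
      = if p = (k, l) then Es (xP N) N k * Es (xP N) N l else 0 := by
    intro p _
    rw [hφ, hcoeff]
    by_cases h : p = (k, l)
    · subst h
      rw [if_pos ⟨rfl, rfl⟩, if_pos rfl, one_smul]
    · rw [if_neg (fun hh => h (Prod.ext hh.1 hh.2)), if_neg h, zero_smul]
  have hR : ∀ p ∈ Finset.range (N+1) ×ˢ Finset.range (N+1),
      φ ((MvPolynomial.X (1:Fin 2) ^ p.1 * MvPolynomial.X (0:Fin 2) ^ p.2)
        ⊗ₜ[ℚ] (Es (xP N) N p.1 * Es (xP N) N p.2))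
      = if p = (l, k) then Es (xP N) N l * Es (xP N) N k else 0 := by
    intro p _
    rw [hφ]
    have : MvPolynomial.coeff μ (MvPolynomial.X (1:Fin 2) ^ p.1 * MvPolynomial.X (0:Fin 2) ^ p.2)
        = if p.2 = k ∧ p.1 = l then (1:ℚ) else 0 := by
      rw [mul_comm]
      exact hcoeff p.2 p.1
    rw [this]
    by_cases h : p = (l, k)
    · subst h
      rw [if_pos ⟨rfl, rfl⟩, if_pos rfl, one_smul]
    · rw [if_neg, if_neg h, zero_smul]
      rintro ⟨h1, h2⟩
      exact h (Prod.ext h2 h1)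
  rw [Finset.sum_congr rfl hL, Finset.sum_congr rfl hR] at happ
  rw [Finset.sum_ite_eq' _ ((k, l) : ℕ × ℕ), Finset.sum_ite_eq' _ ((l, k) : ℕ × ℕ)] at happ
  rw [if_pos, if_pos] at happ
  · exact happ
  · simp [Finset.mem_product]; omega
  · simp [Finset.mem_product]; omega
end Quot

section Bridge
variable (N : ℕ)

lemma colL_nodup (S : Finset ℕ) : (colL S).Nodup := by
  simp [colL, Finset.sort_nodup]

lemma colL_toFinset (S : Finset ℕ) : (colL S).toFinset = S := by
  ext a
  rw [List.mem_toFinset, mem_colL]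

/-- a strictly decreasing list is recovered from its finset of entries -/
lemma colL_eq_of (L : List ℕ) (h : L.Pairwise (· > ·)) : colL L.toFinset = L := by
  refine (fun hp h1 h2 => List.Perm.eq_of_pairwise' (r := (· ≥ ·)) h1 h2 hp) ?_ ?_ ?_
  · exact List.perm_of_nodup_nodup_toFinset_eq (colL_nodup _) (h.imp ne_of_gt)
      (colL_toFinset _)
  · exact (colL_pairwise _).imp le_of_lt
  · exact h.imp le_of_lt

lemma piP_eU (k : ℕ) : piP N (eU N k) = Es (xP N) N k := by
  classical
  rw [eU, map_sum, Es]
  refine Finset.sum_bij (fun (w : Fin k → Fin N) _ =>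
    (List.ofFn fun i => ((w i : ℕ))).toFinset) ?_ ?_ ?_ ?_
  · -- membership
    intro w hw
    rw [Finset.mem_filter] at hw
    have hw' := hw.2
    have hinj : Function.Injective w := by
      intro i j hij
      rcases lt_trichotomy i j with h | h | h
      · exact absurd (hw' i j h) (by rw [hij]; exact lt_irrefl _)
      · exact h
      · exact absurd (hw' j i h) (by rw [hij]; exact lt_irrefl _)
    rw [Finset.mem_powersetCard]
    constructor
    · intro a ha
      rw [List.mem_toFinset, List.mem_ofFn] at ha
      obtain ⟨i, rfl⟩ := ha
      exact Finset.mem_range.2 (w i).2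
    · rw [List.toFinset_card_of_nodup (List.nodup_ofFn.2 (fun i j hij => by
        exact hinj (Fin.val_injective hij)))]
      simp
  · -- injectivity
    intro w₁ hw₁ w₂ hw₂ heq
    rw [Finset.mem_filter] at hw₁ hw₂
    have hp1 : (List.ofFn fun i => ((w₁ i : ℕ))).Pairwise (· > ·) :=
      List.pairwise_ofFn.2 (fun i j hij => hw₁.2 i j hij)
    have hp2 : (List.ofFn fun i => ((w₂ i : ℕ))).Pairwise (· > ·) :=
      List.pairwise_ofFn.2 (fun i j hij => hw₂.2 i j hij)
    have h1 := colL_eq_of _ hp1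
    have h2 := colL_eq_of _ hp2
    rw [heq, h2] at h1
    have := List.ofFn_inj.1 h1
    funext i
    exact (Fin.val_injective (congrFun this i)).symm
  · -- surjectivity
    intro S hS
    rw [Finset.mem_powersetCard] at hS
    have hlen : (colL S).length = k := by
      rw [colL, List.length_reverse, Finset.length_sort, hS.2]
    have hbd : ∀ (i : ℕ) (hi : i < (colL S).length), (colL S)[i] < N := by
      intro i hi
      have : (colL S)[i] ∈ S := mem_colL.1 (List.getElem_mem hi)
      exact Finset.mem_range.1 (hS.1 this)
    refine ⟨fun i : Fin k => ⟨(colL S)[(i : ℕ)]'(by rw [hlen]; exact i.2),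
      hbd _ (by rw [hlen]; exact i.2)⟩, ?_, ?_⟩
    · rw [Finset.mem_filter]
      refine ⟨Finset.mem_univ _, ?_⟩
      intro i j hij
      show (colL S)[(j : ℕ)] < (colL S)[(i : ℕ)]
      exact List.pairwise_iff_getElem.1 (colL_pairwise S) _ _ _ _ hij
    · -- S = toFinset (ofFn ...)
      have hthis : (List.ofFn fun i : Fin k =>
          ((⟨(colL S)[(i : ℕ)]'(by rw [hlen]; exact i.2), hbd _ (by rw [hlen]; exact i.2)⟩ : Fin N) : ℕ))
          = colL S := by
        apply List.ext_getElem
        · simp [hlen]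
        · intro i h1 h2
          simp [List.getElem_ofFn]
      simp only
      rw [hthis, colL_toFinset]
  · -- values
    intro w hw
    rw [Finset.mem_filter] at hw
    have hp : (List.ofFn fun i => ((w i : ℕ))).Pairwise (· > ·) :=
      List.pairwise_ofFn.2 (fun i j hij => hw.2 i j hij)
    rw [colL_eq_of _ hp]
    rw [map_list_prod, List.map_ofFn, Pw, List.map_ofFn]
    refine congrArg List.prod (congrArg List.ofFn (funext fun i => ?_))
    show piP N (FreeAlgebra.ι ℚ (w i)) = xP N ((w i : ℕ))
    rw [xP, dif_pos (w i).2]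

theorem stmt13' (k l : ℕ) :
    eU N k * eU N l - eU N l * eU N k ∈ Iplac N := by
  have h := Es_comm N k l
  rw [← piP_eU, ← piP_eU, ← map_mul, ← map_mul] at h
  have h2 : (Iplac N).ringCon (eU N k * eU N l) (eU N l * eU N k) := by
    exact Quotient.exact' h
  rw [(Iplac N).mem_iff]
  have h3 := (Iplac N).ringCon.sub h2 ((Iplac N).ringCon.refl (eU N l * eU N k))
  simpa using h3
end Bridge

/-- the plactic ideal satisfies the commutation relation
`e_k(u) e_ℓ(u) ≡ e_ℓ(u) e_k(u) mod I_plac`. -/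
theorem stmt13 (N : ℕ) (k l : ℕ) (hk : 1 ≤ k) (hl : 1 ≤ l) :
    eU N k * eU N l - eU N l * eU N k ∈ Iplac N := stmt13' N k l
end

section
/- For two words w and w' on {1,...,N}, u_w ≡ u_{w'} mod I_plac if and only if the RSK insertion tableaux of w and w' coincide: P(w) = P(w'). -/
open scoped Classical

section RSK

variable {α : Type*} [LinearOrder α]

/-- Insert `x` into a row: bump the leftmost entry strictly greater than `x`,
or append `x` at the end if there is none. Returns the new row and the bumped
entry (if any). -/
def bumpRow : List α → α → List α × Option α
  | [], x => ([x], none)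
  | a :: as, x =>
      if a ≤ x then
        let r := bumpRow as x
        (a :: r.1, r.2)
      else (x :: as, some a)

/-- RSK row insertion of a letter into a tableau (given as its list of rows). -/
def insertTab : List (List α) → α → List (List α)
  | [], x => [[x]]
  | r :: rest, x =>
      match bumpRow r x with
      | (r', none) => r' :: rest
      | (r', some y) => r' :: insertTab rest y

/-- The RSK insertion tableau `P(w)` of a word `w`. -/
def RSKP (w : List α) : List (List α) := w.foldl insertTab []

/-- Semistandard Young tableaux, encoded as lists of rows: rows are nonempty
and weakly increasing, row lengths are weakly decreasing, and columns are
strictly increasing. -/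
def IsSSYT (T : List (List α)) : Prop :=
  (∀ r ∈ T, r ≠ []) ∧
  (T.map List.length).Pairwise (· ≥ ·) ∧
  (∀ r ∈ T, r.Pairwise (· ≤ ·)) ∧
  ∀ (i j c : ℕ) (hi : i < T.length) (hj : j < T.length), i < j →
    ∀ (hc : c < (T.get ⟨j, hj⟩).length) (hc' : c < (T.get ⟨i, hi⟩).length),
      (T.get ⟨i, hi⟩).get ⟨c, hc'⟩ < (T.get ⟨j, hj⟩).get ⟨c, hc⟩

/-- The column reading word of a tableau: read each column bottom to top,
columns left to right. -/
def colWord (T : List (List α)) : List α :=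
  (List.range ((T.headD []).length)).flatMap fun c =>
    T.reverse.filterMap fun r => r[c]?

end RSK
section Knuth

variable {α : Type*} [LinearOrder α]

/-- Elementary Knuth moves. -/
inductive KStep : List α → List α → Prop
  | one (u v : List α) (a b c : α) (h1 : a ≤ b) (h2 : b < c) :
      KStep (u ++ [a, c, b] ++ v) (u ++ [c, a, b] ++ v)
  | two (u v : List α) (a b c : α) (h1 : a < b) (h2 : b ≤ c) :
      KStep (u ++ [b, a, c] ++ v) (u ++ [b, c, a] ++ v)

/-- Knuth equivalence. -/
def Kequiv : List α → List α → Prop := Relation.EqvGen KStep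

theorem Kequiv.refl (w : List α) : Kequiv w w := Relation.EqvGen.refl w
theorem Kequiv.symm {w w' : List α} (h : Kequiv w w') : Kequiv w' w := Relation.EqvGen.symm _ _ h
theorem Kequiv.trans {w₁ w₂ w₃ : List α} (h : Kequiv w₁ w₂) (h' : Kequiv w₂ w₃) :
    Kequiv w₁ w₃ := Relation.EqvGen.trans _ _ _ h h'
theorem Kequiv.of_step {w w' : List α} (h : KStep w w') : Kequiv w w' := Relation.EqvGen.rel _ _ h

theorem KStep.append_left {w w' : List α} (x : List α) (h : KStep w w') :
    KStep (x ++ w) (x ++ w') := by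
  cases h with
  | one u v a b c h1 h2 =>
      have e1 : x ++ (u ++ [a, c, b] ++ v) = (x ++ u) ++ [a, c, b] ++ v := by simp
      have e2 : x ++ (u ++ [c, a, b] ++ v) = (x ++ u) ++ [c, a, b] ++ v := by simp
      rw [e1, e2]; exact KStep.one _ _ _ _ _ h1 h2
  | two u v a b c h1 h2 =>
      have e1 : x ++ (u ++ [b, a, c] ++ v) = (x ++ u) ++ [b, a, c] ++ v := by simp
      have e2 : x ++ (u ++ [b, c, a] ++ v) = (x ++ u) ++ [b, c, a] ++ v := by simp
      rw [e1, e2]; exact KStep.two _ _ _ _ _ h1 h2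

theorem KStep.append_right {w w' : List α} (x : List α) (h : KStep w w') :
    KStep (w ++ x) (w' ++ x) := by
  cases h with
  | one u v a b c h1 h2 =>
      have e1 : (u ++ [a, c, b] ++ v) ++ x = u ++ [a, c, b] ++ (v ++ x) := by simp
      have e2 : (u ++ [c, a, b] ++ v) ++ x = u ++ [c, a, b] ++ (v ++ x) := by simp
      rw [e1, e2]; exact KStep.one _ _ _ _ _ h1 h2
  | two u v a b c h1 h2 =>
      have e1 : (u ++ [b, a, c] ++ v) ++ x = u ++ [b, a, c] ++ (v ++ x) := by simp
      have e2 : (u ++ [b, c, a] ++ v) ++ x = u ++ [b, c, a] ++ (v ++ x) := by simp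
      rw [e1, e2]; exact KStep.two _ _ _ _ _ h1 h2

theorem Kequiv.append_left {w w' : List α} (x : List α) (h : Kequiv w w') :
    Kequiv (x ++ w) (x ++ w') := by
  induction h with
  | rel _ _ h => exact Kequiv.of_step (h.append_left x)
  | refl _ => exact Kequiv.refl _
  | symm _ _ _ ih => exact ih.symm
  | trans _ _ _ _ _ ih1 ih2 => exact ih1.trans ih2

theorem Kequiv.append_right {w w' : List α} (x : List α) (h : Kequiv w w') :
    Kequiv (w ++ x) (w' ++ x) := by
  induction h with
  | rel _ _ h => exact Kequiv.of_step (h.append_right x)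
  | refl _ => exact Kequiv.refl _
  | symm _ _ _ ih => exact ih.symm
  | trans _ _ _ _ _ ih1 ih2 => exact ih1.trans ih2

theorem Kequiv.append {w w' u u' : List α} (h : Kequiv w w') (h' : Kequiv u u') :
    Kequiv (w ++ u) (w' ++ u') :=
  (h.append_right u).trans (h'.append_left w')

/-! ### bumpRow lemmas -/

theorem bumpRow_cons_le {e x : α} {t : List α} (h : e ≤ x) :
    bumpRow (e :: t) x = (e :: (bumpRow t x).1, (bumpRow t x).2) := by
  simp [bumpRow, h]

theorem bumpRow_cons_gt {e x : α} {t : List α} (h : ¬ e ≤ x) :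
    bumpRow (e :: t) x = (x :: t, some e) := by
  simp [bumpRow, h]

theorem bumpRow_lt {x y : α} : ∀ {r : List α}, (bumpRow r x).2 = some y → x < y := by
  intro r
  induction r with
  | nil => simp [bumpRow]
  | cons e t ih =>
      by_cases h : e ≤ x
      · rw [bumpRow_cons_le h]; exact ih
      · rw [bumpRow_cons_gt h]; rintro ⟨rfl⟩; exact lt_of_not_ge h

theorem bumpRow_mem {x y : α} : ∀ {r : List α}, (bumpRow r x).2 = some y → y ∈ r := by
  intro r
  induction r with
  | nil => simp [bumpRow]
  | cons e t ih =>
      by_cases h : e ≤ x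
      · rw [bumpRow_cons_le h]; intro hy; exact List.mem_cons_of_mem _ (ih hy)
      · rw [bumpRow_cons_gt h]; rintro ⟨rfl⟩; exact List.mem_cons_self

theorem bumpRow_self_mem (x : α) : ∀ (r : List α), x ∈ (bumpRow r x).1 := by
  intro r
  induction r with
  | nil => simp [bumpRow]
  | cons e t ih =>
      by_cases h : e ≤ x
      · rw [bumpRow_cons_le h]; exact List.mem_cons_of_mem _ ih
      · rw [bumpRow_cons_gt h]; exact List.mem_cons_self

theorem bumpRow_mem_of {x z : α} : ∀ {r : List α}, z ∈ (bumpRow r x).1 → z ∈ r ∨ z = x := by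
  intro r
  induction r with
  | nil => simp [bumpRow]
  | cons e t ih =>
      by_cases h : e ≤ x
      · rw [bumpRow_cons_le h]
        intro hz
        rcases List.mem_cons.1 hz with rfl | hz
        · exact Or.inl (List.mem_cons_self)
        · rcases ih hz with h' | h'
          · exact Or.inl (List.mem_cons_of_mem _ h')
          · exact Or.inr h'
      · rw [bumpRow_cons_gt h]
        intro hz
        rcases List.mem_cons.1 hz with rfl | hz
        · exact Or.inr rfl
        · exact Or.inl (List.mem_cons_of_mem _ hz)

theorem bumpRow_none_of_le {x : α} : ∀ {r : List α}, (∀ z ∈ r, z ≤ x) →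
    bumpRow r x = (r ++ [x], none) := by
  intro r
  induction r with
  | nil => simp [bumpRow]
  | cons e t ih =>
      intro h
      rw [bumpRow_cons_le (h e (List.mem_cons_self)), ih (fun z hz => h z (List.mem_cons_of_mem _ hz))]
      rfl

theorem bumpRow_le_of_none {x : α} : ∀ {r : List α}, (bumpRow r x).2 = none →
    ∀ z ∈ r, z ≤ x := by
  intro r
  induction r with
  | nil => simp
  | cons e t ih =>
      by_cases h : e ≤ x
      · rw [bumpRow_cons_le h]
        intro h' z hz
        rcases List.mem_cons.1 hz with rfl | hz
        · exact h
        · exact ih h' z hz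
      · rw [bumpRow_cons_gt h]; simp

theorem bumpRow_isSome_of_mem {x z : α} : ∀ {r : List α}, z ∈ r → x < z →
    ∃ y, (bumpRow r x).2 = some y := by
  intro r hz hxz
  rcases h : (bumpRow r x).2 with _ | y
  · exact absurd (bumpRow_le_of_none h z hz) (not_le.2 hxz)
  · exact ⟨y, rfl⟩

theorem bumpRow_double_le {b c h : α} (hbc : b < c) :
    ∀ {r : List α}, (bumpRow ((bumpRow r c).1) b).2 = some h → h ≤ c := by
  intro r
  induction r with
  | nil =>
      show (bumpRow (bumpRow [] c).1 b).2 = some h → h ≤ c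
      rw [show (bumpRow ([] : List α) c) = ([c], none) from rfl]
      rw [bumpRow_cons_gt (not_le.2 hbc)]
      rintro ⟨rfl⟩; rfl
  | cons f t ih =>
      by_cases hfc : f ≤ c
      · rw [bumpRow_cons_le hfc]
        by_cases hfb : f ≤ b
        · rw [bumpRow_cons_le hfb]; exact ih
        · rw [bumpRow_cons_gt hfb]; rintro ⟨rfl⟩; exact hfc
      · rw [bumpRow_cons_gt hfc]
        rw [bumpRow_cons_gt (not_le.2 hbc)]
        rintro ⟨rfl⟩; rfl

theorem bumpRow_sorted {x : α} : ∀ {r : List α}, r.Pairwise (· ≤ ·) →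
    ((bumpRow r x).1).Pairwise (· ≤ ·) := by
  intro r
  induction r with
  | nil => simp [bumpRow]
  | cons e t ih =>
      intro hr
      rw [List.pairwise_cons] at hr
      by_cases h : e ≤ x
      · rw [bumpRow_cons_le h]
        rw [List.pairwise_cons]
        refine ⟨fun z hz => ?_, ih hr.2⟩
        rcases bumpRow_mem_of hz with h' | rfl
        · exact hr.1 z h'
        · exact h
      · rw [bumpRow_cons_gt h]
        rw [List.pairwise_cons]
        exact ⟨fun z hz => le_trans (le_of_lt (not_le.1 h)) (hr.1 z hz), hr.2⟩

end Knuth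
section Knuth2

variable {α : Type*} [LinearOrder α]

/-- Insert a whole word into a row; return the final row and the word of bumped letters. -/
def insRow (r : List α) : List α → List α × List α
  | [] => (r, [])
  | x :: xs =>
      let p := bumpRow r x
      let q := insRow p.1 xs
      (q.1, p.2.toList ++ q.2)

theorem insertTab_cons (r : List α) (rest : List (List α)) (x : α) :
    insertTab (r :: rest) x =
      (bumpRow r x).1 ::
        (match (bumpRow r x).2 with
          | none => rest
          | some y => insertTab rest y) := by
  rcases h : bumpRow r x with ⟨r', o⟩
  cases o <;> simp [insertTab, h]

theorem foldl_insertTab_cons (w : List α) : ∀ (r : List α) (rest : List (List α)),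
    List.foldl insertTab (r :: rest) w =
      (insRow r w).1 :: List.foldl insertTab rest (insRow r w).2 := by
  induction w with
  | nil => intro r rest; simp [insRow]
  | cons x xs ih =>
      intro r rest
      rw [List.foldl_cons, insertTab_cons]
      rcases h : (bumpRow r x).2 with _ | y
      · rw [ih]
        simp [insRow, h]
      · rw [ih]
        simp [insRow, h]

/-- All rows of a tableau are sorted. -/
def RowsSorted (T : List (List α)) : Prop := ∀ r ∈ T, r.Pairwise (· ≤ ·)

theorem RowsSorted.insertTab {T : List (List α)} (h : RowsSorted T) (x : α) :
    RowsSorted (insertTab T x) := by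
  induction T generalizing x with
  | nil =>
      intro r hr
      simp only [_root_.insertTab] at hr
      rcases List.mem_singleton.1 hr with rfl
      simp
  | cons r rest ih =>
      rw [insertTab_cons]
      have hr : r.Pairwise (· ≤ ·) := h r (List.mem_cons_self)
      have hrest : RowsSorted rest := fun s hs => h s (List.mem_cons_of_mem _ hs)
      rcases h2 : (bumpRow r x).2 with _ | y
      · intro s hs
        rcases List.mem_cons.1 hs with rfl | hs
        · exact bumpRow_sorted hr
        · exact hrest s hs
      · intro s hs
        rcases List.mem_cons.1 hs with rfl | hs
        · exact bumpRow_sorted hr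
        · exact ih hrest y s hs

theorem RowsSorted.RSKP (w : List α) : RowsSorted (RSKP w) := by
  induction w using List.reverseRecOn with
  | nil => intro r hr; simp [_root_.RSKP] at hr
  | append_singleton t x ih =>
      rw [_root_.RSKP, List.foldl_append]
      exact RowsSorted.insertTab ih x

/-- Bottom-to-top row reading word. -/
def rowWord (T : List (List α)) : List α := T.reverse.flatten

theorem rowWord_cons (r : List α) (rest : List (List α)) :
    rowWord (r :: rest) = rowWord rest ++ r := by
  simp [rowWord]

/-- moving a big letter right through small letters -/
theorem K_slide_left {x y : α} (hxy : x < y) : ∀ (p : List α), (∀ z ∈ p, z ≤ x) →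
    p.Pairwise (· ≤ ·) → Kequiv (y :: (p ++ [x])) (p ++ [y, x]) := by
  intro p
  induction p with
  | nil => intro _ _; exact Kequiv.refl _
  | cons a q ih =>
      intro hle hs
      rw [List.pairwise_cons] at hs
      have ha : a ≤ x := hle a (List.mem_cons_self)
      -- first letter of q ++ [x] :
      have step : Kequiv (y :: a :: q ++ [x]) (a :: y :: q ++ [x]) := by
        rcases q with _ | ⟨z, q'⟩
        · have h0 := KStep.one ([] : List α) ([] : List α) a x y ha hxy
          have h0' : KStep [a, y, x] [y, a, x] := by simpa using h0
          exact (Kequiv.of_step h0').symm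
        · have hz : z ∈ a :: z :: q' := List.mem_cons_of_mem _ (List.mem_cons_self)
          have haz : a ≤ z := hs.1 z (List.mem_cons_self)
          have hzx : z ≤ x := hle z hz
          have h0 := KStep.one ([] : List α) (q' ++ [x]) a z y haz (lt_of_le_of_lt hzx hxy)
          have h0' : KStep (a :: y :: z :: (q' ++ [x])) (y :: a :: z :: (q' ++ [x])) := by
            simpa using h0
          exact (Kequiv.of_step h0').symm
      refine step.trans ?_
      have := (ih (fun z hz => hle z (List.mem_cons_of_mem _ hz)) hs.2).append_left [a]
      simpa using this

/-- moving a small letter right through big letters -/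
theorem K_slide_right {x y : α} (hxy : x < y) : ∀ (s : List α), (∀ z ∈ s, y ≤ z) →
    s.Pairwise (· ≤ ·) → Kequiv (y :: x :: s) (y :: s ++ [x]) := by
  intro s
  induction s generalizing y with
  | nil => intro _ _; exact Kequiv.refl _
  | cons c t ih =>
      intro hge hs
      rw [List.pairwise_cons] at hs
      have hyc : y ≤ c := hge c (List.mem_cons_self)
      have step : KStep (y :: x :: c :: t) (y :: c :: x :: t) := by
        have := KStep.two ([] : List α) t x y c hxy hyc
        simpa using this
      refine (Kequiv.of_step step).trans ?_
      have hxc : x < c := lt_of_lt_of_le hxy hyc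
      have := (ih (y := c) hxc (fun z hz => hs.1 z hz) hs.2).append_left [y]
      simpa using this

/-- Key single-row lemma: reading word compatibility of bumping. -/
theorem K_bump (p s : List α) (x y : α) (hp : ∀ z ∈ p, z ≤ x) (hxy : x < y)
    (hs : ∀ z ∈ s, y ≤ z) (hps : p.Pairwise (· ≤ ·)) (hss : s.Pairwise (· ≤ ·)) :
    Kequiv (y :: (p ++ x :: s)) ((p ++ y :: s) ++ [x]) := by
  have h1 : Kequiv (y :: (p ++ [x]) ++ s) ((p ++ [y, x]) ++ s) :=
    (K_slide_left hxy p hp hps).append_right s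
  have h2 : Kequiv (p ++ (y :: x :: s)) (p ++ (y :: s ++ [x])) :=
    (K_slide_right hxy s hs hss).append_left p
  have e1 : y :: (p ++ x :: s) = y :: (p ++ [x]) ++ s := by simp
  have e2 : (p ++ [y, x]) ++ s = p ++ (y :: x :: s) := by simp
  have e3 : (p ++ y :: s) ++ [x] = p ++ (y :: s ++ [x]) := by simp
  rw [e1, e3]
  exact h1.trans (e2 ▸ h2)

theorem sorted_split {r : List α} (hr : r.Pairwise (· ≤ ·)) {p s : List α} {y : α}
    (h : r = p ++ y :: s) :
    p.Pairwise (· ≤ ·) ∧ s.Pairwise (· ≤ ·) ∧ ∀ z ∈ s, y ≤ z := by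
  subst h
  have h1 := hr.sublist (List.sublist_append_left p (y :: s))
  have h2 : (y :: s).Pairwise (· ≤ ·) := hr.sublist (List.sublist_append_right p (y :: s))
  rw [List.pairwise_cons] at h2
  exact ⟨h1, h2.2, h2.1⟩

/-- bumpRow decomposition when it bumps. -/
theorem bumpRow_some_decomp {x y : α} : ∀ {r : List α}, (bumpRow r x).2 = some y →
    ∃ p s, r = p ++ y :: s ∧ (bumpRow r x).1 = p ++ x :: s ∧ (∀ z ∈ p, z ≤ x) ∧ x < y := by
  intro r
  induction r with
  | nil => simp [bumpRow]
  | cons e t ih =>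
      by_cases h : e ≤ x
      · rw [bumpRow_cons_le h]
        intro h2
        obtain ⟨p, s, h3, h4, h5, h6⟩ := ih h2
        refine ⟨e :: p, s, by rw [h3]; rfl, by simp [h4], ?_, h6⟩
        intro z hz
        rcases List.mem_cons.1 hz with rfl | hz
        · exact h
        · exact h5 z hz
      · rw [bumpRow_cons_gt h]
        rintro ⟨rfl⟩
        exact ⟨[], t, rfl, rfl, by simp, not_le.1 h⟩

theorem K_insertTab (x : α) : ∀ (T : List (List α)), RowsSorted T →
    Kequiv (rowWord (insertTab T x)) (rowWord T ++ [x]) := by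
  intro T
  induction T generalizing x with
  | nil => intro _; simp [insertTab, rowWord]; exact Kequiv.refl _
  | cons r rest ih =>
      intro hT
      have hr : r.Pairwise (· ≤ ·) := hT r (List.mem_cons_self)
      have hrest : RowsSorted rest := fun s hs => hT s (List.mem_cons_of_mem _ hs)
      rw [insertTab_cons]
      rcases h2 : (bumpRow r x).2 with _ | y
      · rw [rowWord_cons, rowWord_cons]
        have : (bumpRow r x).1 = r ++ [x] := by
          rw [bumpRow_none_of_le (bumpRow_le_of_none h2)]
        rw [this]
        simp only [← List.append_assoc]
        exact Kequiv.refl _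
      · obtain ⟨p, s, hdec, hres, hple, hlt⟩ := bumpRow_some_decomp h2
        obtain ⟨hps, hss, hys⟩ := sorted_split hr hdec
        rw [rowWord_cons, rowWord_cons, hres]
        refine ((ih y hrest).append_right _).trans ?_
        have key : Kequiv (y :: (p ++ x :: s)) ((p ++ y :: s) ++ [x]) :=
          K_bump p s x y hple hlt hys hps hss
        have := key.append_left (rowWord rest)
        rw [hdec]
        simpa [List.append_assoc] using this

theorem K_RSKP (w : List α) : Kequiv w (rowWord (RSKP w)) := by
  induction w using List.reverseRecOn with
  | nil => exact Kequiv.refl _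
  | append_singleton t x ih =>
      rw [RSKP, List.foldl_append]
      refine Kequiv.trans ?_ (K_insertTab x _ (RowsSorted.RSKP t)).symm
      exact (ih.append_right [x])

end Knuth2
section Knuth3

variable {α : Type*} [LinearOrder α]

theorem bumpRow_le_of_mem_gt {x f z : α} : ∀ {r : List α}, r.Pairwise (· ≤ ·) →
    (bumpRow r x).2 = some f → z ∈ r → x < z → f ≤ z := by
  intro r
  induction r with
  | nil => simp [bumpRow]
  | cons e t ih =>
      intro hs hf hz hxz
      rw [List.pairwise_cons] at hs
      by_cases h : e ≤ x
      · rw [bumpRow_cons_le h] at hf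
        rcases List.mem_cons.1 hz with rfl | hz
        · exact absurd hxz (not_lt.2 h)
        · exact ih hs.2 hf hz hxz
      · rw [bumpRow_cons_gt h] at hf
        rcases Option.some_injective _ hf.symm with rfl
        rcases List.mem_cons.1 hz with rfl | hz
        · exact le_refl _
        · exact hs.1 z hz

/-- Elementary Knuth pair of three-letter words. -/
def EP (w w' : List α) : Prop :=
  (∃ a b c : α, a ≤ b ∧ b < c ∧ w = [a, c, b] ∧ w' = [c, a, b]) ∨
  (∃ a b c : α, a < b ∧ b ≤ c ∧ w = [b, a, c] ∧ w' = [b, c, a])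

theorem insRow_triple (r : List α) (x y z : α) :
    insRow r [x, y, z] =
      ((bumpRow (bumpRow (bumpRow r x).1 y).1 z).1,
        (bumpRow r x).2.toList ++ (bumpRow (bumpRow r x).1 y).2.toList
          ++ (bumpRow (bumpRow (bumpRow r x).1 y).1 z).2.toList) := by
  simp [insRow]

theorem insRow_cons_le {e : α} {w : List α} (hw : ∀ x ∈ w, e ≤ x) : ∀ (t : List α),
    insRow (e :: t) w = (e :: (insRow t w).1, (insRow t w).2) := by
  induction w with
  | nil => intro t; simp [insRow]
  | cons x xs ih =>
      intro t
      have hex : e ≤ x := hw x (List.mem_cons_self)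
      simp only [insRow, bumpRow_cons_le hex]
      rw [ih (fun z hz => hw z (List.mem_cons_of_mem _ hz))]

/-- Knuth's key lemma, row version: inserting Knuth-equivalent triples into a
sorted row yields the same row, and bumped words that are equal or again form
an elementary Knuth pair. -/
theorem knuth_row {w w' : List α} : ∀ (r : List α), r.Pairwise (· ≤ ·) → EP w w' →
    (insRow r w).1 = (insRow r w').1 ∧
      ((insRow r w).2 = (insRow r w').2 ∨ EP (insRow r w).2 (insRow r w').2 ∨
        EP (insRow r w').2 (insRow r w).2) := by
  intro r
  induction r with
  | nil =>
      rintro - (⟨a, b, c, hab, hbc, rfl, rfl⟩ | ⟨a, b, c, hab, hbc, rfl, rfl⟩)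
      · have hac : a ≤ c := hab.trans hbc.le
        have hnca : ¬ c ≤ a := not_le.2 (lt_of_le_of_lt hab hbc)
        have hncb : ¬ c ≤ b := not_le.2 hbc
        simp [insRow_triple, bumpRow_cons_le hac, bumpRow_cons_le hab, bumpRow_cons_gt hnca,
          bumpRow_cons_gt hncb, show bumpRow ([] : List α) a = ([a], none) from rfl,
          show bumpRow ([] : List α) c = ([c], none) from rfl,
          show bumpRow ([] : List α) b = ([b], none) from rfl]
      · have hnba : ¬ b ≤ a := not_le.2 hab
        have hac : a ≤ c := hab.le.trans hbc
        simp [insRow_triple, bumpRow_cons_le hbc, bumpRow_cons_le hac, bumpRow_cons_gt hnba,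
          show bumpRow ([] : List α) b = ([b], none) from rfl,
          show bumpRow ([] : List α) c = ([c], none) from rfl]
  | cons e r' ih =>
      intro hs hEP
      rw [List.pairwise_cons] at hs
      have her' : ∀ z ∈ r', e ≤ z := hs.1
      rcases hEP with ⟨a, b, c, hab, hbc, hw, hw'⟩ | ⟨a, b, c, hab, hbc, hw, hw'⟩
      · -- type 1 : w = [a,c,b], w' = [c,a,b], a ≤ b < c
        subst hw; subst hw'
        rcases le_or_gt e a with hea | hae
        · -- recurse
          have h1 : ∀ x ∈ [a, c, b], e ≤ x := by
            intro x hx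
            have hec : e ≤ c := hea.trans (hab.trans hbc.le)
            have heb : e ≤ b := hea.trans hab
            simp only [List.mem_cons, List.mem_singleton] at hx
            rcases hx with rfl | rfl | rfl | h
            exacts [hea, hec, heb, absurd h List.not_mem_nil]
          have h2 : ∀ x ∈ [c, a, b], e ≤ x := by
            intro x hx
            simp only [List.mem_cons, List.mem_singleton] at hx
            rcases hx with rfl | rfl | rfl | h
            exacts [hea.trans (hab.trans hbc.le), hea, hea.trans hab, absurd h List.not_mem_nil]
          rw [insRow_cons_le h1, insRow_cons_le h2]
          obtain ⟨hrow, houts⟩ := ih hs.2 (Or.inl ⟨a, b, c, hab, hbc, rfl, rfl⟩)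
          exact ⟨by rw [hrow], houts⟩
        · have hnea : ¬ e ≤ a := not_le.2 hae
          by_cases hec : e ≤ c
          · -- merged case a < e ≤ c
            have hac : a ≤ c := hab.trans hbc.le
            simp only [insRow_triple, bumpRow_cons_gt hnea, bumpRow_cons_le hac,
              bumpRow_cons_le hab, bumpRow_cons_le hec]
            rcases hoc : (bumpRow r' c).2 with _ | g
            · simp [hoc]
            · obtain ⟨h, hob⟩ := bumpRow_isSome_of_mem (bumpRow_self_mem c r') hbc
              have heh : e ≤ h := by
                rcases bumpRow_mem_of (bumpRow_mem hob) with h1 | rfl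
                · exact her' _ h1
                · exact hec
              have hhg : h < g := lt_of_le_of_lt (bumpRow_double_le hbc hob) (bumpRow_lt hoc)
              refine ⟨trivial, Or.inr (Or.inl ?_)⟩
              rw [hob]
              exact Or.inl ⟨e, h, g, heh, hhg, by simp, by simp⟩
          · -- case c < e
            have hnec : ¬ e ≤ c := hec
            have hnca : ¬ c ≤ a := not_le.2 (lt_of_le_of_lt hab hbc)
            have hncb : ¬ c ≤ b := not_le.2 hbc
            have hac : a ≤ c := hab.trans hbc.le
            rcases r' with _ | ⟨f, r''⟩
            · simp only [insRow_triple, bumpRow_cons_gt hnea, bumpRow_cons_le hac,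
                bumpRow_cons_le hab, bumpRow_cons_gt hnec, bumpRow_cons_gt hnca]
              rw [show bumpRow ([] : List α) c = ([c], none) from rfl,
                  show bumpRow ([] : List α) b = ([b], none) from rfl]
              simp [bumpRow_cons_gt hncb]
            · have hef : e ≤ f := her' f (List.mem_cons_self)
              have hce : c < e := not_le.1 hnec
              have hnfc : ¬ f ≤ c := not_le.2 (lt_of_lt_of_le hce hef)
              have hnfb : ¬ f ≤ b := not_le.2 (hbc.trans (lt_of_lt_of_le hce hef))
              simp only [insRow_triple, bumpRow_cons_gt hnea, bumpRow_cons_le hac,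
                bumpRow_cons_gt hnfc, bumpRow_cons_le hab, bumpRow_cons_gt hncb,
                bumpRow_cons_gt hnec, bumpRow_cons_gt hnca, bumpRow_cons_gt hnfb]
              refine ⟨trivial, Or.inr (Or.inr (Or.inr ⟨c, e, f, hce, hef, by simp, by simp⟩))⟩
      · -- type 2 : w = [b,a,c], w' = [b,c,a], a < b ≤ c
        subst hw; subst hw'
        rcases le_or_gt e a with hea | hae
        · have heb : e ≤ b := hea.trans hab.le
          have hec : e ≤ c := heb.trans hbc
          have h1 : ∀ x ∈ [b, a, c], e ≤ x := by
            intro x hx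
            simp only [List.mem_cons, List.mem_singleton] at hx
            rcases hx with rfl | rfl | rfl | h
            exacts [heb, hea, hec, absurd h List.not_mem_nil]
          have h2 : ∀ x ∈ [b, c, a], e ≤ x := by
            intro x hx
            simp only [List.mem_cons, List.mem_singleton] at hx
            rcases hx with rfl | rfl | rfl | h
            exacts [heb, hec, hea, absurd h List.not_mem_nil]
          rw [insRow_cons_le h1, insRow_cons_le h2]
          obtain ⟨hrow, houts⟩ := ih hs.2 (Or.inr ⟨a, b, c, hab, hbc, rfl, rfl⟩)
          exact ⟨by rw [hrow], houts⟩
        · have hnea : ¬ e ≤ a := not_le.2 hae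
          have hnba : ¬ b ≤ a := not_le.2 hab
          have hac : a ≤ c := hab.le.trans hbc
          by_cases heb : e ≤ b
          · -- a < e ≤ b
            have hec : e ≤ c := heb.trans hbc
            simp only [insRow_triple, bumpRow_cons_le heb, bumpRow_cons_gt hnea,
              bumpRow_cons_le hac, bumpRow_cons_le hec]
            rcases hoc : (bumpRow (bumpRow r' b).1 c).2 with _ | g
            · simp [hoc]
            · have hcg : c < g := bumpRow_lt hoc
              have hgsb : g ∈ (bumpRow r' b).1 := bumpRow_mem hoc
              have hgr' : g ∈ r' := by
                rcases bumpRow_mem_of hgsb with h1 | rfl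
                · exact h1
                · exact absurd hbc (not_le.2 hcg)
              rcases hob : (bumpRow r' b).2 with _ | f
              · exfalso
                have := bumpRow_le_of_none hob g hgr'
                exact absurd (this.trans hbc) (not_le.2 hcg)
              · have hbf : b < f := bumpRow_lt hob
                have hef : e < f := lt_of_le_of_lt heb hbf
                have hfg : f ≤ g := bumpRow_le_of_mem_gt hs.2 hob hgr' (lt_of_le_of_lt hbc hcg)
                refine ⟨trivial, Or.inr (Or.inl ?_)⟩
                exact Or.inr ⟨e, f, g, hef, hfg, by simp, by simp⟩
          · -- b < e
            have hnbe : ¬ e ≤ b := heb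
            simp only [insRow_triple, bumpRow_cons_gt hnbe, bumpRow_cons_gt hnba,
              bumpRow_cons_le hac, bumpRow_cons_le hbc]
            rcases hoc : (bumpRow r' c).2 with _ | g
            · simp [hoc]
            · have heg : e ≤ g := her' g (bumpRow_mem hoc)
              have hbe : b < e := not_le.1 heb
              refine ⟨trivial, Or.inr (Or.inl ?_)⟩
              exact Or.inr ⟨b, e, g, hbe, heg, by simp, by simp⟩

end Knuth3
section Knuth4

variable {α : Type*} [LinearOrder α]

/-- Knuth's lemma, tableau version. -/
theorem knuth_tab : ∀ (T : List (List α)), RowsSorted T → ∀ {w w' : List α}, EP w w' →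
    List.foldl insertTab T w = List.foldl insertTab T w' := by
  intro T
  induction T with
  | nil =>
      rintro - w w' (⟨a, b, c, hab, hbc, rfl, rfl⟩ | ⟨a, b, c, hab, hbc, rfl, rfl⟩)
      · have hac : a ≤ c := hab.trans hbc.le
        have hnca : ¬ c ≤ a := not_le.2 (lt_of_le_of_lt hab hbc)
        have hncb : ¬ c ≤ b := not_le.2 hbc
        simp [List.foldl_cons, insertTab_cons, bumpRow_cons_le hac, bumpRow_cons_le hab,
          bumpRow_cons_gt hnca, bumpRow_cons_gt hncb,
          show insertTab ([] : List (List α)) a = [[a]] from rfl,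
          show insertTab ([] : List (List α)) c = [[c]] from rfl,
          show ∀ x : α, bumpRow ([] : List α) x = ([x], none) from fun _ => rfl,
          show ∀ x : α, insertTab ([] : List (List α)) x = [[x]] from fun _ => rfl]
      · have hnba : ¬ b ≤ a := not_le.2 hab
        have hac : a ≤ c := hab.le.trans hbc
        simp [List.foldl_cons, insertTab_cons, bumpRow_cons_le hbc, bumpRow_cons_le hac,
          bumpRow_cons_gt hnba,
          show ∀ x : α, bumpRow ([] : List α) x = ([x], none) from fun _ => rfl,
          show ∀ x : α, insertTab ([] : List (List α)) x = [[x]] from fun _ => rfl]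
  | cons r rest ih =>
      intro hT w w' hEP
      have hr : r.Pairwise (· ≤ ·) := hT r (List.mem_cons_self)
      have hrest : RowsSorted rest := fun s hs => hT s (List.mem_cons_of_mem _ hs)
      rw [foldl_insertTab_cons, foldl_insertTab_cons]
      obtain ⟨h1, h2⟩ := knuth_row r hr hEP
      rw [h1]
      rcases h2 with h2 | h2 | h2
      · rw [h2]
      · rw [ih hrest h2]
      · rw [ih hrest h2]

theorem KStep_RSKP {w w' : List α} (h : KStep w w') : RSKP w = RSKP w' := by
  cases h with
  | one u v a b c h1 h2 =>
      show RSKP (u ++ [a, c, b] ++ v) = RSKP (u ++ [c, a, b] ++ v)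
      rw [RSKP, RSKP, List.foldl_append, List.foldl_append, List.foldl_append,
        List.foldl_append]
      congr 1
      exact knuth_tab _ (RowsSorted.RSKP u) (Or.inl ⟨a, b, c, h1, h2, rfl, rfl⟩)
  | two u v a b c h1 h2 =>
      show RSKP (u ++ [b, a, c] ++ v) = RSKP (u ++ [b, c, a] ++ v)
      rw [RSKP, RSKP, List.foldl_append, List.foldl_append, List.foldl_append,
        List.foldl_append]
      congr 1
      exact knuth_tab _ (RowsSorted.RSKP u) (Or.inr ⟨a, b, c, h1, h2, rfl, rfl⟩)

theorem Kequiv_RSKP {w w' : List α} (h : Kequiv w w') : RSKP w = RSKP w' := by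
  induction h with
  | rel _ _ h => exact KStep_RSKP h
  | refl _ => rfl
  | symm _ _ _ ih => exact ih.symm
  | trans _ _ _ _ _ ih1 ih2 => exact ih1.trans ih2

theorem Kequiv_of_RSKP {w w' : List α} (h : RSKP w = RSKP w') : Kequiv w w' := by
  have h1 := K_RSKP w
  rw [h] at h1
  exact h1.trans (K_RSKP w').symm

end Knuth4

/-- The monomial `u_w` of a word `w`, in `U = ℚ⟨u_1,…,u_N⟩`. -/
noncomputable def uList {N : ℕ} (w : List (Fin N)) : FreeAlgebra ℚ (Fin N) :=
  (w.map (FreeAlgebra.ι ℚ)).prod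

section Algebra

variable {N : ℕ}

theorem uList_nil : uList ([] : List (Fin N)) = 1 := by simp [uList]

theorem uList_cons (x : Fin N) (t : List (Fin N)) :
    uList (x :: t) = FreeAlgebra.ι ℚ x * uList t := by simp [uList]

theorem uList_append (s t : List (Fin N)) : uList (s ++ t) = uList s * uList t := by
  simp [uList]

theorem uList_triple (a b c : Fin N) :
    uList [a, b, c] = FreeAlgebra.ι ℚ a * FreeAlgebra.ι ℚ b * FreeAlgebra.ι ℚ c := by
  simp [uList, mul_assoc]

theorem mem_of_KStep {w w' : List (Fin N)} (h : KStep w w') :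
    uList w - uList w' ∈ Iplac N := by
  cases h with
  | one u v a b c h1 h2 =>
      have key : uList (u ++ [a, c, b] ++ v) - uList (u ++ [c, a, b] ++ v) =
          uList u * ((FreeAlgebra.ι ℚ a * FreeAlgebra.ι ℚ c * FreeAlgebra.ι ℚ b
            - FreeAlgebra.ι ℚ c * FreeAlgebra.ι ℚ a * FreeAlgebra.ι ℚ b) * uList v) := by
        rw [uList_append, uList_append, uList_append, uList_append, uList_triple, uList_triple]
        noncomm_ring
      rw [key]
      exact TwoSidedIdeal.mul_mem_left _ _ _ (TwoSidedIdeal.mul_mem_right _ _ _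
        (TwoSidedIdeal.subset_span (Set.mem_union_left _ ⟨a, b, c, h1, h2, rfl⟩)))
  | two u v a b c h1 h2 =>
      have key : uList (u ++ [b, a, c] ++ v) - uList (u ++ [b, c, a] ++ v) =
          uList u * ((FreeAlgebra.ι ℚ b * FreeAlgebra.ι ℚ a * FreeAlgebra.ι ℚ c
            - FreeAlgebra.ι ℚ b * FreeAlgebra.ι ℚ c * FreeAlgebra.ι ℚ a) * uList v) := by
        rw [uList_append, uList_append, uList_append, uList_append, uList_triple, uList_triple]
        noncomm_ring
      rw [key]
      exact TwoSidedIdeal.mul_mem_left _ _ _ (TwoSidedIdeal.mul_mem_right _ _ _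
        (TwoSidedIdeal.subset_span (Set.mem_union_right _ ⟨a, b, c, h1, h2, rfl⟩)))

theorem mem_of_Kequiv {w w' : List (Fin N)} (h : Kequiv w w') :
    uList w - uList w' ∈ Iplac N := by
  induction h with
  | rel _ _ h => exact mem_of_KStep h
  | refl w => simpa using (Iplac N).zero_mem
  | symm x y _ ih => simpa using (Iplac N).neg_mem ih
  | trans x y z _ _ ih1 ih2 => simpa using (Iplac N).add_mem ih1 ih2

/-- The plactic congruence on the free monoid. -/
def Kcon (N : ℕ) : Con (FreeMonoid (Fin N)) where
  r x y := Kequiv (FreeMonoid.toList x) (FreeMonoid.toList y)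
  iseqv := ⟨fun _ => Kequiv.refl _, Kequiv.symm, Kequiv.trans⟩
  mul' h1 h2 := Kequiv.append h1 h2

/-- The quotient map to the monoid algebra of the plactic monoid. -/
noncomputable def placMap (N : ℕ) :
    FreeAlgebra ℚ (Fin N) →ₐ[ℚ] MonoidAlgebra ℚ (Kcon N).Quotient :=
  FreeAlgebra.lift ℚ
    (fun i => MonoidAlgebra.of ℚ (Kcon N).Quotient ((Kcon N).mk' (FreeMonoid.of i)))

theorem placMap_uList (w : List (Fin N)) :
    placMap N (uList w) =
      MonoidAlgebra.of ℚ (Kcon N).Quotient ((Kcon N).mk' (FreeMonoid.ofList w)) := by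
  induction w with
  | nil => simp [uList_nil, MonoidAlgebra.one_def]
  | cons x t ih =>
      rw [uList_cons, map_mul, ih, FreeMonoid.ofList_cons, map_mul, map_mul]
      rw [placMap, FreeAlgebra.lift_ι_apply]

theorem Kequiv_of_mem {w w' : List (Fin N)} (h : uList w - uList w' ∈ Iplac N) :
    Kequiv w w' := by
  have hker : uList w - uList w' ∈ TwoSidedIdeal.ker (placMap N) := by
    refine TwoSidedIdeal.mem_span_iff.1 h _ ?_
    rintro z (⟨a, b, c, h1, h2, rfl⟩ | ⟨a, b, c, h1, h2, rfl⟩)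
    · rw [SetLike.mem_coe, TwoSidedIdeal.mem_ker]
      have e1 : FreeAlgebra.ι ℚ a * FreeAlgebra.ι ℚ c * FreeAlgebra.ι ℚ b = uList [a, c, b] :=
        (uList_triple a c b).symm
      have e2 : FreeAlgebra.ι ℚ c * FreeAlgebra.ι ℚ a * FreeAlgebra.ι ℚ b = uList [c, a, b] :=
        (uList_triple c a b).symm
      rw [map_sub, e1, e2, placMap_uList, placMap_uList, sub_eq_zero]
      congr 1
      have hK : (Kcon N) (FreeMonoid.ofList [a, c, b]) (FreeMonoid.ofList [c, a, b]) :=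
        Kequiv.of_step (by simpa using KStep.one ([] : List (Fin N)) [] a b c h1 h2)
      exact (Kcon N).eq.2 hK
    · rw [SetLike.mem_coe, TwoSidedIdeal.mem_ker]
      have e1 : FreeAlgebra.ι ℚ b * FreeAlgebra.ι ℚ a * FreeAlgebra.ι ℚ c = uList [b, a, c] :=
        (uList_triple b a c).symm
      have e2 : FreeAlgebra.ι ℚ b * FreeAlgebra.ι ℚ c * FreeAlgebra.ι ℚ a = uList [b, c, a] :=
        (uList_triple b c a).symm
      rw [map_sub, e1, e2, placMap_uList, placMap_uList, sub_eq_zero]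
      congr 1
      have hK : (Kcon N) (FreeMonoid.ofList [b, a, c]) (FreeMonoid.ofList [b, c, a]) :=
        Kequiv.of_step (by simpa using KStep.two ([] : List (Fin N)) [] a b c h1 h2)
      exact (Kcon N).eq.2 hK
  rw [TwoSidedIdeal.mem_ker, map_sub, sub_eq_zero, placMap_uList, placMap_uList] at hker
  have h2 : ((Kcon N).mk' (FreeMonoid.ofList w)) = ((Kcon N).mk' (FreeMonoid.ofList w')) :=
    MonoidAlgebra.of_injective hker
  have h3 : (Kcon N) (FreeMonoid.ofList w) (FreeMonoid.ofList w') := (Kcon N).eq.1 h2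
  exact h3

end Algebra

/-- `u_w ≡ u_{w'} mod I_plac` if and only if `P(w) = P(w')`. -/
theorem stmt14 (N : ℕ) (w w' : List (Fin N)) :
    uList w - uList w' ∈ Iplac N ↔ RSKP w = RSKP w' :=
  ⟨fun h => Kequiv_RSKP (Kequiv_of_mem h), fun h => mem_of_Kequiv (Kequiv_of_RSKP h)⟩
end

section
/- For any semistandard Young tableau T, the RSK insertion tableau of its column reading word equals T: P(col(T)) = T. -/
open scoped Classical

section Aux

lemma bumpRow_append (r : List ℕ) (x : ℕ) (h : ∀ a ∈ r, a ≤ x) :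
    bumpRow r x = (r ++ [x], none) := by
  induction r with
  | nil => rfl
  | cons a as ih =>
    simp only [bumpRow, if_pos (h a (by simp)), ih (fun b hb => h b (by simp [hb]))]
    simp

lemma bumpRow_bump (r : List ℕ) (x z : ℕ) (h : ∀ a ∈ r, a ≤ x) (hz : x < z) :
    bumpRow (r ++ [z]) x = (r ++ [x], some z) := by
  induction r with
  | nil => simp [bumpRow, Nat.not_le.mpr hz]
  | cons a as ih =>
    have h' := ih (fun b hb => h b (by simp [hb]))
    simp only [List.cons_append, bumpRow, if_pos (h a (by simp))]
    rw [h']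

lemma insertTab_append (r : List ℕ) (rest : List (List ℕ)) (x : ℕ)
    (h : ∀ a ∈ r, a ≤ x) :
    insertTab (r :: rest) x = (r ++ [x]) :: rest := by
  simp [insertTab, bumpRow_append r x h]

lemma insertTab_bump (r : List ℕ) (rest : List (List ℕ)) (x z : ℕ)
    (h : ∀ a ∈ r, a ≤ x) (hz : x < z) :
    insertTab ((r ++ [z]) :: rest) x = (r ++ [x]) :: insertTab rest z := by
  simp [insertTab, bumpRow_bump r x z h hz]

lemma foldl_insert_col_aux :
    ∀ (t : List ℕ) (y z : ℕ) (r : List ℕ) (rest : List (List ℕ)),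
      List.Pairwise (· > ·) (z :: y :: t) →
      (∀ a ∈ r, ∀ u ∈ y :: t, a ≤ u) →
      List.foldl insertTab ((r ++ [z]) :: rest) (y :: t) =
        (r ++ [(y :: t).getLast (by simp)]) ::
          List.foldl insertTab rest (z :: (y :: t).dropLast)
  | [], y, z, r, rest, hs, hle => by
      have hzy : y < z := ((List.pairwise_cons.1 hs).1 y (by simp))
      simp only [List.foldl_cons, List.foldl_nil, List.getLast_singleton,
        List.dropLast_singleton]
      rw [insertTab_bump r rest y z (fun a ha => hle a ha y (by simp)) hzy]
  | (y' :: t'), y, z, r, rest, hs, hle => by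
      have hzy : y < z := ((List.pairwise_cons.1 hs).1 y (by simp))
      simp only [List.foldl_cons]
      rw [insertTab_bump r rest y z (fun a ha => hle a ha y (by simp)) hzy]
      have hs' : List.Pairwise (· > ·) (y :: y' :: t') := hs.of_cons
      have hle' : ∀ a ∈ r, ∀ u ∈ y' :: t', a ≤ u := by
        intro a ha u hu; exact hle a ha u (by simp [hu])
      have := foldl_insert_col_aux t' y' y r (insertTab rest z) hs' hle'
      simp only [List.foldl_cons] at this ⊢
      rw [this]
      simp

lemma foldl_insert_col (w : List ℕ) (S : List (List ℕ)) (hw : w ≠ [])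
    (hs : w.Pairwise (· > ·)) (hle : ∀ a ∈ S.headD [], ∀ u ∈ w, a ≤ u) :
    List.foldl insertTab S w =
      (S.headD [] ++ [w.getLast hw]) ::
        List.foldl insertTab S.tail w.dropLast := by
  match w, S with
  | [y], [] => simp [insertTab]
  | [y], r :: rest =>
      simp only [List.foldl_cons, List.foldl_nil]
      rw [insertTab_append r rest y (fun a ha => hle a (by simpa using ha) y (by simp))]
      rfl
  | y :: y' :: t, [] =>
      simp only [List.foldl_cons]
      have h0 : insertTab ([] : List (List ℕ)) y = (([] : List ℕ) ++ [y]) :: [] := by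
        simp [insertTab]
      rw [h0]
      have := foldl_insert_col_aux t y' y [] [] hs (by simp)
      simp only [List.foldl_cons] at this ⊢
      rw [this]
      simp
  | y :: y' :: t, r :: rest =>
      simp only [List.foldl_cons]
      have h0 : insertTab (r :: rest) y = (r ++ [y]) :: rest :=
        insertTab_append r rest y (fun a ha => hle a (by simpa using ha) y (by simp))
      rw [h0]
      have := foldl_insert_col_aux t y' y r rest hs
        (fun a ha u hu => hle a (by simpa using ha) u (by simp [hu]))
      simp only [List.foldl_cons] at this ⊢
      rw [this]
      simp

lemma take_le_getElem (r : List ℕ) (n : ℕ) (hn : n < r.length)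
    (hs : r.Pairwise (· ≤ ·)) : ∀ a ∈ r.take n, a ≤ r[n] := by
  intro a ha
  have hsub : (r.take n ++ [r[n]]).Sublist r := by
    rw [← List.concat_eq_append, List.take_concat_get]
    exact List.take_sublist _ _
  have hp : List.Pairwise (· ≤ ·) (r.take n ++ [r[n]]) := hs.sublist hsub
  rw [List.pairwise_append] at hp
  exact hp.2.2 a ha r[n] (by simp)

lemma lemmaB0 : ∀ (T : List (List ℕ)),
    (∀ r ∈ T, r ≠ []) →
    ((T.filterMap (fun r => r[0]?)).Pairwise (· < ·)) →
    List.foldl insertTab [] (T.filterMap (fun r => r[0]?)).reverse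
      = T.map (List.take 1)
  | [], _, _ => by simp
  | (r :: rest), hne, hsort => by
      obtain ⟨a, r', rfl⟩ : ∃ a r', r = a :: r' := by
        cases r with
        | nil => exact absurd rfl (hne _ (by simp))
        | cons a r' => exact ⟨a, r', rfl⟩
      have hfm : (((a :: r') :: rest).filterMap (fun r => r[0]?))
          = a :: rest.filterMap (fun r => r[0]?) := by simp
      rw [hfm] at hsort ⊢
      by_cases h2 : rest.filterMap (fun r => r[0]?) = []
      · have : rest = [] := by
          rw [List.filterMap_eq_nil_iff] at h2
          cases rest with
          | nil => rfl
          | cons b bs =>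
            exfalso
            obtain ⟨c, b', rfl⟩ : ∃ c b', b = c :: b' := by
              cases b with
              | nil => exact absurd rfl (hne _ (by simp))
              | cons c b' => exact ⟨c, b', rfl⟩
            simpa using h2 (c :: b') (by simp)
        subst this
        simp [insertTab]
      · have hw : (a :: rest.filterMap (fun r => r[0]?)).reverse
            = (rest.filterMap (fun r => r[0]?)).reverse ++ [a] := by simp
        rw [hw]
        obtain ⟨y, t, hyt⟩ : ∃ y t, (rest.filterMap (fun r => r[0]?)).reverse ++ [a] = y :: t := by
          cases h : (rest.filterMap (fun r => r[0]?)).reverse ++ [a] with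
          | nil => simp at h
          | cons y t => exact ⟨y, t, rfl⟩
        have hsrev : ((rest.filterMap (fun r => r[0]?)).reverse ++ [a]).Pairwise (· > ·) := by
          rw [show (rest.filterMap (fun r => r[0]?)).reverse ++ [a]
            = (a :: rest.filterMap (fun r => r[0]?)).reverse by simp]
          rw [List.pairwise_reverse]
          exact hsort
        have := foldl_insert_col ((rest.filterMap (fun r => r[0]?)).reverse ++ [a])
          [] (by simp) hsrev (by simp)
        rw [this]
        have hgl : ((rest.filterMap (fun r => r[0]?)).reverse ++ [a]).getLast (by simp) = a :=
          List.getLast_concat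
        rw [hgl, List.dropLast_concat]
        have ih := lemmaB0 rest (fun r hr => hne r (by simp [hr])) hsort.of_cons
        simp only [List.tail_nil]
        rw [ih]
        simp

lemma lemmaB (n : ℕ) : ∀ (T : List (List ℕ)),
    (∀ r ∈ T, r.Pairwise (· ≤ ·)) →
    ((T.map List.length).Pairwise (· ≥ ·)) →
    ((T.filterMap (fun r => r[n]?)).Pairwise (· < ·)) →
    List.foldl insertTab (T.map (List.take n)) (T.filterMap (fun r => r[n]?)).reverse
      = T.map (List.take (n + 1))
  | [], _, _, _ => by simp
  | (r :: rest), hrow, hlen, hsort => by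
      by_cases hr : r.length ≤ n
      · have hall : ∀ r' ∈ rest, r'.length ≤ n := by
          intro r' hr'
          have := (List.pairwise_cons.1 hlen).1 r'.length (by simp; exact ⟨r', hr', rfl⟩)
          omega
        have hfm : ((r :: rest).filterMap (fun r => r[n]?)) = [] := by
          rw [List.filterMap_eq_nil_iff]
          intro a ha
          rcases List.mem_cons.mp ha with ha | ha
          · subst ha; exact List.getElem?_eq_none hr
          · exact List.getElem?_eq_none (hall a ha)
        rw [hfm]
        simp only [List.reverse_nil, List.foldl_nil]
        apply List.map_congr_left
        intro x hx
        rcases List.mem_cons.mp hx with hx | hx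
        · subst hx; rw [List.take_of_length_le hr, List.take_of_length_le (by omega)]
        · rw [List.take_of_length_le (hall x hx), List.take_of_length_le (by have := hall x hx; omega)]
      · push_neg at hr
        have hfm : ((r :: rest).filterMap (fun r => r[n]?))
            = r[n] :: rest.filterMap (fun r => r[n]?) := by
          simp [List.filterMap_cons, List.getElem?_eq_getElem hr]
        rw [hfm] at hsort ⊢
        have hrsorted : r.Pairwise (· ≤ ·) := hrow r (by simp)
        have hler : ∀ a ∈ r.take n, a ≤ r[n] := take_le_getElem r n hr hrsorted
        have htake : r.take n ++ [r[n]] = r.take (n + 1) := by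
          rw [← List.concat_eq_append, List.take_concat_get]
        by_cases h2 : rest.filterMap (fun r => r[n]?) = []
        · rw [h2]
          simp only [List.reverse_cons, List.reverse_nil, List.nil_append,
            List.map_cons, List.foldl_cons, List.foldl_nil]
          rw [insertTab_append _ _ _ hler, htake]
          congr 1
          apply List.map_congr_left
          intro x hx
          have hxn : x[n]? = none := (List.filterMap_eq_nil_iff.mp h2) x hx
          have : x.length ≤ n := by
            by_contra hc
            push_neg at hc
            rw [List.getElem?_eq_getElem hc] at hxn
            simp at hxn
          rw [List.take_of_length_le this, List.take_of_length_le (by omega)]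
        · have hw : (r[n] :: rest.filterMap (fun r => r[n]?)).reverse
              = (rest.filterMap (fun r => r[n]?)).reverse ++ [r[n]] := by simp
          rw [hw]
          have hsrev : ((rest.filterMap (fun r => r[n]?)).reverse ++ [r[n]]).Pairwise (· > ·) := by
            rw [show (rest.filterMap (fun r => r[n]?)).reverse ++ [r[n]]
              = (r[n] :: rest.filterMap (fun r => r[n]?)).reverse by simp]
            rw [List.pairwise_reverse]
            exact hsort
          have hle : ∀ a ∈ ((r :: rest).map (List.take n)).headD [],
              ∀ u ∈ (rest.filterMap (fun r => r[n]?)).reverse ++ [r[n]], a ≤ u := by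
            intro a ha u hu
            simp only [List.map_cons, List.headD_cons] at ha
            have haR : a ≤ r[n] := hler a ha
            rcases List.mem_append.mp hu with hu | hu
            · have : u ∈ rest.filterMap (fun r => r[n]?) := List.mem_reverse.mp hu
              have : r[n] < u := (List.pairwise_cons.1 hsort).1 u this
              omega
            · simp at hu; omega
          have := foldl_insert_col ((rest.filterMap (fun r => r[n]?)).reverse ++ [r[n]])
            ((r :: rest).map (List.take n)) (by simp) hsrev hle
          rw [this]
          have hgl : ((rest.filterMap (fun r => r[n]?)).reverse ++ [r[n]]).getLast (by simp)
              = r[n] := List.getLast_concat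
          rw [hgl, List.dropLast_concat]
          simp only [List.map_cons, List.headD_cons, List.tail_cons]
          have ih := lemmaB n rest (fun r' hr' => hrow r' (by simp [hr']))
            hlen.of_cons hsort.of_cons
          rw [ih, htake]

lemma col_sorted (T : List (List ℕ)) (hT : IsSSYT T) (n : ℕ) :
    (T.filterMap (fun r => r[n]?)).Pairwise (· < ·) := by
  obtain ⟨-, -, -, h4⟩ := hT
  rw [List.pairwise_filterMap]
  rw [List.pairwise_iff_getElem]
  intro i j hi hj hij a ha b hb
  have hai : n < T[i].length := by
    by_contra hc
    push_neg at hc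
    rw [List.getElem?_eq_none hc] at ha
    simp at ha
  have hbj : n < T[j].length := by
    by_contra hc
    push_neg at hc
    rw [List.getElem?_eq_none hc] at hb
    simp at hb
  have haa : a = T[i][n] := by
    rw [List.getElem?_eq_getElem hai] at ha; simpa using ha.symm
  have hbb : b = T[j][n] := by
    rw [List.getElem?_eq_getElem hbj] at hb; simpa using hb.symm
  subst haa hbb
  exact h4 i j n hi hj hij hbj hai

end Aux

/-- for a semistandard Young tableau `T`, the RSK insertion
tableau of its column reading word is `T` itself. -/
theorem stmt15 (T : List (List ℕ)) (hT : IsSSYT T) : RSKP (colWord T) = T := by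
  have hcols := col_sorted T hT
  obtain ⟨hne, hlen, hrow, -⟩ := hT
  cases T with
  | nil => rfl
  | cons r rest =>
    have hN : 1 ≤ r.length := by
      have := hne r (by simp)
      cases r with
      | nil => simp at this
      | cons a r' => simp
    have key : ∀ j, 1 ≤ j →
        RSKP ((List.range j).flatMap
          (fun c => (r :: rest).reverse.filterMap (fun row => row[c]?)))
          = (r :: rest).map (List.take j) := by
      intro j hj
      induction j with
      | zero => omega
      | succ j ih =>
        rcases Nat.eq_or_lt_of_le hj with hj1 | hj1
        · -- j + 1 = 1
          have hj0 : j = 0 := by omega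
          subst hj0
          have : List.range 1 = [0] := rfl
          rw [this]
          simp only [List.flatMap_cons, List.flatMap_nil, List.append_nil]
          rw [List.filterMap_reverse]
          exact lemmaB0 (r :: rest) hne (hcols 0)
        · have hj' : 1 ≤ j := by omega
          rw [List.range_succ, List.flatMap_append]
          simp only [List.flatMap_cons, List.flatMap_nil, List.append_nil]
          unfold RSKP
          rw [List.foldl_append]
          have ihe := ih hj'
          unfold RSKP at ihe
          rw [ihe]
          rw [List.filterMap_reverse]
          exact lemmaB j (r :: rest) hrow hlen (hcols j)
    have hcw : colWord (r :: rest)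
        = (List.range r.length).flatMap
            (fun c => (r :: rest).reverse.filterMap (fun row => row[c]?)) := rfl
    rw [hcw, key r.length hN]
    have hall : ∀ x ∈ r :: rest, List.take r.length x = x := by
      intro x hx
      rcases List.mem_cons.mp hx with hx | hx
      · subst hx; exact List.take_of_length_le le_rfl
      · have : x.length ≤ r.length := by
          have := (List.pairwise_cons.1 hlen).1 x.length (by simp; exact ⟨x, hx, rfl⟩)
          omega
        exact List.take_of_length_le this
    rw [List.map_congr_left hall]
    simp
end
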